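/- arXiv:1403.3314 — 9 statements merged into one kernel-verified Lean document; each statement's English description precedes it below -/
import Mathlib

section
/- The set D' = {(x₁,x₂,x₃) ∈ ℝ³ : x₂ > 0 and x₁ > x₃²/2 − log x₂} contains no complete affine line: for every point p ∈ ℝ³ and every nonzero vector v ∈ ℝ³ there exists t ∈ ℝ such that p + t·v ∉ D'. -/
/-- `D'` contains no complete affine line: for every `p` and nonzero `v` there is `t`
with `p + t • v ∉ D'`. -/
theorem stmt_2 (p v : ℝ × ℝ × ℝ) (hv : v ≠ 0) :
    ∃ t : ℝ,
      p + t • v ∉ {x : ℝ × ℝ × ℝ | 0 < x.2.1 ∧ x.2.2 ^ 2 / 2 - Real.log x.2.1 < x.1} := by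
  obtain ⟨p1, p2, p3⟩ := p
  obtain ⟨v1, v2, v3⟩ := v
  simp only [Prod.mk_add_mk, Prod.smul_mk, smul_eq_mul, Set.mem_setOf_eq, not_and, not_lt]
  by_cases h2 : v2 = 0
  · by_cases hp2 : p2 ≤ 0
    · exact ⟨0, fun h => absurd h (by simp [h2]; linarith)⟩
    · push_neg at hp2
      by_cases h3 : v3 = 0
      · have h1 : v1 ≠ 0 := by
          intro h1
          exact hv (by simp [h1, h2, h3, Prod.ext_iff])
        refine ⟨(p3 ^ 2 / 2 - Real.log p2 - p1) / v1, fun _ => ?_⟩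
        rw [h2, h3]
        simp only [mul_zero, add_zero]
        rw [div_mul_cancel₀ _ h1]
        linarith
      · set b : ℝ := v1 / v3 with hb
        set c : ℝ := p1 - b * p3 + Real.log p2 with hc
        set s : ℝ := 2 * |b| + |c| + 2 with hs
        refine ⟨(s - p3) / v3, fun _ => ?_⟩
        rw [h2]
        simp only [mul_zero, add_zero]
        have hx3 : p3 + (s - p3) / v3 * v3 = s := by field_simp; ring
        rw [hx3]
        have hx1 : p1 + (s - p3) / v3 * v1 = b * s + (p1 - b * p3) := by
          rw [hb]; ring
        rw [hx1]
        have hbb : b ≤ |b| := le_abs_self b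
        have hcc : c ≤ |c| := le_abs_self c
        have hb0 : 0 ≤ |b| := abs_nonneg b
        have hc0 : 0 ≤ |c| := abs_nonneg c
        have hs2 : (2:ℝ) ≤ s := by rw [hs]; linarith
        have hsnn : (0:ℝ) ≤ s := by linarith
        have hbs : b * s ≤ |b| * s := mul_le_mul_of_nonneg_right hbb hsnn
        have h5 : s - 2 * |b| = |c| + 2 := by rw [hs]; ring
        have key : b * s + c ≤ s ^ 2 / 2 := by nlinarith [hbs, hcc, hs2, hb0, hc0, h5]
        have hlog : Real.log p2 = c - (p1 - b * p3) := by rw [hc]; ring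
        rw [hlog]
        linarith
  · refine ⟨(-1 - p2) / v2, fun h => absurd h ?_⟩
    rw [div_mul_cancel₀ _ h2]
    norm_num
end

section
/- For all real numbers a and b, the affine transformation of ℝ³ given by (x₁,x₂,x₃) ↦ (x₁ + b·x₃ + b²/2 − a, eᵃ·x₂, x₃ + b) maps the set D' = {(x₁,x₂,x₃) ∈ ℝ³ : x₂ > 0 and x₁ > x₃²/2 − log x₂} bijectively onto itself. -/
lemma stmt_4_mapsTo (a b : ℝ) :
    Set.MapsTo
      (fun x : ℝ × ℝ × ℝ =>
        ((x.1 + b * x.2.2 + b ^ 2 / 2 - a, Real.exp a * x.2.1, x.2.2 + b) : ℝ × ℝ × ℝ))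
      {x : ℝ × ℝ × ℝ | 0 < x.2.1 ∧ x.2.2 ^ 2 / 2 - Real.log x.2.1 < x.1}
      {x : ℝ × ℝ × ℝ | 0 < x.2.1 ∧ x.2.2 ^ 2 / 2 - Real.log x.2.1 < x.1} := by
  rintro ⟨x1, x2, x3⟩ ⟨h2, h1⟩
  refine ⟨mul_pos (Real.exp_pos a) h2, ?_⟩
  simp only at h1 h2 ⊢
  rw [Real.log_mul (Real.exp_ne_zero a) (ne_of_gt h2), Real.log_exp]
  nlinarith [h1]

/-- For all `a b : ℝ`, the affine map
`(x₁,x₂,x₃) ↦ (x₁ + b·x₃ + b²/2 − a, eᵃ·x₂, x₃ + b)` maps `D'` bijectively onto itself. -/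
theorem stmt_4 (a b : ℝ) :
    Set.BijOn
      (fun x : ℝ × ℝ × ℝ =>
        ((x.1 + b * x.2.2 + b ^ 2 / 2 - a, Real.exp a * x.2.1, x.2.2 + b) : ℝ × ℝ × ℝ))
      {x : ℝ × ℝ × ℝ | 0 < x.2.1 ∧ x.2.2 ^ 2 / 2 - Real.log x.2.1 < x.1}
      {x : ℝ × ℝ × ℝ | 0 < x.2.1 ∧ x.2.2 ^ 2 / 2 - Real.log x.2.1 < x.1} := by
  have hinv : Set.InvOn
      (fun x : ℝ × ℝ × ℝ =>
        ((x.1 + (-b) * x.2.2 + (-b) ^ 2 / 2 - (-a), Real.exp (-a) * x.2.1, x.2.2 + (-b)) : ℝ × ℝ × ℝ))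
      (fun x : ℝ × ℝ × ℝ =>
        ((x.1 + b * x.2.2 + b ^ 2 / 2 - a, Real.exp a * x.2.1, x.2.2 + b) : ℝ × ℝ × ℝ))
      {x : ℝ × ℝ × ℝ | 0 < x.2.1 ∧ x.2.2 ^ 2 / 2 - Real.log x.2.1 < x.1}
      {x : ℝ × ℝ × ℝ | 0 < x.2.1 ∧ x.2.2 ^ 2 / 2 - Real.log x.2.1 < x.1} := by
    constructor <;> rintro ⟨x1, x2, x3⟩ _ <;>
      simp only [Prod.mk.injEq, ← Real.exp_add] <;>
      refine ⟨by ring, ?_, by ring⟩ <;> simp [← mul_assoc, ← Real.exp_add]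
  exact hinv.bijOn (stmt_4_mapsTo a b) (stmt_4_mapsTo (-a) (-b))
end

section
/- For all real numbers a and b, the matrix exponential of the 4×4 real matrix X'(a,b) with rows (0,0,b,−a), (0,a,0,0), (0,0,0,b), (0,0,0,0) equals the 4×4 matrix with rows (1,0,b,b²/2−a), (0,eᵃ,0,0), (0,0,1,b), (0,0,0,1). -/
open Matrix

private lemma nilp_sq (a b : ℝ) :
    (!![0, 0, b, -a; 0, 0, 0, 0; 0, 0, 0, b; 0, 0, 0, 0] : Matrix (Fin 4) (Fin 4) ℝ) ^ 2 =
    !![0, 0, 0, b^2; 0, 0, 0, 0; 0, 0, 0, 0; 0, 0, 0, 0] := by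
  ext i j
  rw [pow_two]
  fin_cases i <;> fin_cases j <;>
    simp [Matrix.mul_apply, Fin.sum_univ_four, Matrix.vecHead, Matrix.vecTail] <;> ring

private lemma nilp_cube (a b : ℝ) :
    (!![0, 0, b, -a; 0, 0, 0, 0; 0, 0, 0, b; 0, 0, 0, 0] : Matrix (Fin 4) (Fin 4) ℝ) ^ 3 = 0 := by
  rw [pow_succ, nilp_sq]
  ext i j
  fin_cases i <;> fin_cases j <;>
    simp [Matrix.mul_apply, Fin.sum_univ_four, Matrix.vecHead, Matrix.vecTail]

private lemma exp_nilp (a b : ℝ) :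
    NormedSpace.exp
      (!![0, 0, b, -a; 0, 0, 0, 0; 0, 0, 0, b; 0, 0, 0, 0] : Matrix (Fin 4) (Fin 4) ℝ) =
    !![1, 0, b, b ^ 2 / 2 - a; 0, 1, 0, 0; 0, 0, 1, b; 0, 0, 0, 1] := by
  set N : Matrix (Fin 4) (Fin 4) ℝ := !![0, 0, b, -a; 0, 0, 0, 0; 0, 0, 0, b; 0, 0, 0, 0] with hN
  have hzero : ∀ n ∉ Finset.range 3, (((Nat.factorial n : ℝ))⁻¹ • N ^ n) = 0 := by
    intro n hn
    rw [Finset.mem_range, not_lt] at hn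
    have h3 : N ^ n = 0 := by
      obtain ⟨k, rfl⟩ := Nat.exists_eq_add_of_le hn
      rw [pow_add, nilp_cube, zero_mul]
    rw [h3, smul_zero]
  simp only [NormedSpace.exp_eq_tsum ℝ]
  rw [tsum_eq_sum hzero]
  rw [Finset.sum_range_succ, Finset.sum_range_succ, Finset.sum_range_one]
  rw [pow_zero, pow_one, nilp_sq]
  ext i j
  fin_cases i <;> fin_cases j <;>
    simp [hN, Matrix.one_apply, Nat.factorial, Matrix.vecHead, Matrix.vecTail] <;> ring

/-- The matrix exponential of `X'(a,b)` equals the displayed element of `L'`. -/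
theorem stmt_5 (a b : ℝ) :
    NormedSpace.exp
      (!![0, 0, b, -a;
          0, a, 0, 0;
          0, 0, 0, b;
          0, 0, 0, 0] : Matrix (Fin 4) (Fin 4) ℝ) =
    !![1, 0, b, b ^ 2 / 2 - a;
       0, Real.exp a, 0, 0;
       0, 0, 1, b;
       0, 0, 0, 1] := by
  have hsplit :
      (!![0, 0, b, -a; 0, a, 0, 0; 0, 0, 0, b; 0, 0, 0, 0] : Matrix (Fin 4) (Fin 4) ℝ) =
      Matrix.diagonal ![0, a, 0, 0] +
        !![0, 0, b, -a; 0, 0, 0, 0; 0, 0, 0, b; 0, 0, 0, 0] := by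
    ext i j
    fin_cases i <;> fin_cases j <;>
      simp [Matrix.diagonal, Matrix.vecHead, Matrix.vecTail]
  have hcomm : Commute (Matrix.diagonal ![(0:ℝ), a, 0, 0])
      (!![0, 0, b, -a; 0, 0, 0, 0; 0, 0, 0, b; 0, 0, 0, 0] : Matrix (Fin 4) (Fin 4) ℝ) := by
    unfold Commute SemiconjBy
    ext i j
    fin_cases i <;> fin_cases j <;>
      simp [Matrix.mul_apply, Fin.sum_univ_four, Matrix.diagonal, Matrix.vecHead, Matrix.vecTail]
  rw [hsplit]
  have hadd := Matrix.exp_add_of_commute _ _ hcomm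
  rw [hadd, Matrix.exp_diagonal, exp_nilp]
  have hexp0 : NormedSpace.exp (0 : ℝ) = 1 := NormedSpace.exp_zero
  have hexpa : NormedSpace.exp a = Real.exp a := (congrFun Real.exp_eq_exp_ℝ a).symm
  ext i j
  fin_cases i <;> fin_cases j <;>
    simp [Matrix.mul_apply, Fin.sum_univ_four, Matrix.diagonal, Matrix.vecHead, Matrix.vecTail,
      hexp0, hexpa]
end

section
/- For every real t ≠ 0 and all real numbers r and s, the matrix exponential of the 4×4 real matrix with rows (0,r,s,0), (0,t·r,0,r), (0,0,0,s), (0,0,0,0) equals the 4×4 matrix with rows (1, (e^{t·r}−1)/t, s, (e^{t·r}−t·r−1)/t² + s²/2), (0, e^{t·r}, 0, (e^{t·r}−1)/t), (0,0,1,s), (0,0,0,1). -/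
open NormedSpace Finset

section Aux

attribute [local instance] Matrix.linftyOpNormedRing Matrix.linftyOpNormedAlgebra

theorem stmt_6_aux (t : ℝ) (ht : t ≠ 0) (r s : ℝ) :
    NormedSpace.exp
      (!![0, r, s, 0;
          0, t * r, 0, r;
          0, 0, 0, s;
          0, 0, 0, 0] : Matrix (Fin 4) (Fin 4) ℝ) =
    !![1, (Real.exp (t * r) - 1) / t, s, (Real.exp (t * r) - t * r - 1) / t ^ 2 + s ^ 2 / 2;
       0, Real.exp (t * r), 0, (Real.exp (t * r) - 1) / t;
       0, 0, 1, s;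
       0, 0, 0, 1] := by
  set A : Matrix (Fin 4) (Fin 4) ℝ :=
    !![0, r, s, 0; 0, t * r, 0, r; 0, 0, 0, s; 0, 0, 0, 0] with hA
  have hA2 : A ^ 2 = !![0, t*r^2, 0, r^2+s^2; 0, t^2*r^2, 0, t*r^2; 0,0,0,0; 0,0,0,0] := by
    rw [pow_two, hA]
    ext i j
    fin_cases i <;> fin_cases j <;>
      simp [Matrix.mul_apply, Fin.sum_univ_four, Matrix.vecHead, Matrix.vecTail] <;> ring
  have hA3 : A ^ 3 = !![0, t^2*r^3, 0, t*r^3; 0, t^3*r^3, 0, t^2*r^3; 0,0,0,0; 0,0,0,0] := by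
    rw [pow_succ, hA2, hA]
    ext i j
    fin_cases i <;> fin_cases j <;>
      simp [Matrix.mul_apply, Fin.sum_univ_four, Matrix.vecHead, Matrix.vecTail] <;> ring
  have hA4 : A ^ 4 = (t * r) • (A ^ 3) := by
    rw [pow_succ, hA3, hA]
    ext i j
    fin_cases i <;> fin_cases j <;>
      simp [Matrix.mul_apply, Fin.sum_univ_four, Matrix.vecHead, Matrix.vecTail] <;> ring
  have hAn : ∀ n : ℕ, A ^ (n + 3) = (t * r) ^ n • A ^ 3 := by
    intro n
    induction n with
    | zero => simp
    | succ n ih =>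
      have h5 : n + 1 + 3 = (n + 3) + 1 := by omega
      rw [h5, pow_succ, ih, Matrix.smul_mul, ← pow_succ, hA4, smul_smul, ← pow_succ]
  -- scalar series
  set c : ℝ := ∑' n : ℕ, ((Nat.factorial (n + 3) : ℕ) : ℝ)⁻¹ * (t * r) ^ n with hc
  have hsum : Summable fun n : ℕ => ((Nat.factorial (n + 3) : ℕ) : ℝ)⁻¹ * (t * r) ^ n := by
    apply Summable.of_norm_bounded (Real.summable_pow_div_factorial |t * r|)
    intro n
    have h1 : ((n.factorial : ℕ) : ℝ) ≤ (((n+3).factorial : ℕ) : ℝ) := by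
      exact_mod_cast Nat.factorial_le (by omega : n ≤ n + 3)
    have h2 : (0:ℝ) < ((n.factorial : ℕ) : ℝ) := by
      exact_mod_cast Nat.factorial_pos n
    calc ‖(((Nat.factorial (n + 3) : ℕ) : ℝ))⁻¹ * (t * r) ^ n‖
        = |t * r| ^ n / (((n+3).factorial : ℕ) : ℝ) := by
          rw [norm_mul, norm_pow, Real.norm_eq_abs, Real.norm_eq_abs, abs_inv, Nat.abs_cast]
          ring
      _ ≤ |t * r| ^ n / ((n.factorial : ℕ) : ℝ) := by gcongr <;> positivity
  have hexpsum : Summable fun n : ℕ => (t * r) ^ n / ((n.factorial : ℕ) : ℝ) := Real.summable_pow_div_factorial (t * r)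
  have hxc : c * (t * r) ^ 3 = Real.exp (t * r) - 1 - t * r - (t * r) ^ 2 / 2 := by
    have h1 : Real.exp (t * r) = ∑' n : ℕ, (t * r) ^ n / ((n.factorial : ℕ) : ℝ) := by
      rw [Real.exp_eq_exp_ℝ]; rw [exp_eq_tsum_div]
    have h2 := (Summable.sum_add_tsum_nat_add 3 hexpsum)
    have h3 : ∑' n : ℕ, (t * r) ^ (n + 3) / ((Nat.factorial (n + 3) : ℕ) : ℝ)
        = (t * r) ^ 3 * ∑' n : ℕ, ((Nat.factorial (n + 3) : ℕ) : ℝ)⁻¹ * (t * r) ^ n := by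
      rw [← tsum_mul_left]
      congr 1; funext n
      rw [pow_add]
      ring
    have h4 : ∑ i ∈ Finset.range 3, (t * r) ^ i / ((i.factorial : ℕ) : ℝ) = 1 + t * r + (t * r) ^ 2 / 2 := by
      norm_num [Finset.sum_range_succ, Nat.factorial]
    rw [h1, ← h2, h4, h3]
    ring
  -- matrix series
  have hmsum : Summable fun n : ℕ => (((n.factorial : ℕ):ℝ))⁻¹ • A ^ n := expSeries_summable' (𝕂 := ℝ) A
  have hexp : exp A = (1 : Matrix (Fin 4) (Fin 4) ℝ) + A + (2 : ℝ)⁻¹ • A ^ 2 + c • A ^ 3 := by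
    simp only [exp_eq_tsum ℝ]
    rw [← Summable.sum_add_tsum_nat_add 3 hmsum]
    have htail : ∑' n : ℕ, (((Nat.factorial (n + 3) : ℕ) : ℝ))⁻¹ • A ^ (n + 3) = c • A ^ 3 := by
      have : ∀ n : ℕ, (((Nat.factorial (n + 3) : ℕ) : ℝ))⁻¹ • A ^ (n + 3)
          = (((Nat.factorial (n + 3) : ℕ) : ℝ)⁻¹ * (t * r) ^ n) • A ^ 3 := by
        intro n
        rw [hAn n, smul_smul]
      rw [tsum_congr this, Summable.tsum_smul_const hsum]
    rw [htail]
    rw [Finset.sum_range_succ, Finset.sum_range_succ, Finset.sum_range_one]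
    norm_num
  rw [hexp, hA2, hA3, hA]
  have he1 : Real.exp (t * r) = 1 + t * r + (t * r) ^ 2 / 2 + c * (t * r) ^ 3 := by
    linarith [hxc]
  ext i j
  fin_cases i <;> fin_cases j <;>
    simp only [Matrix.add_apply, Matrix.smul_apply, Matrix.one_apply, Matrix.cons_val', Matrix.cons_val_zero, Matrix.cons_val_one, Matrix.head_cons, Matrix.empty_val', Matrix.cons_val_fin_one, Matrix.head_fin_const, Fin.isValue, smul_eq_mul, Matrix.cons_val_two, Matrix.cons_val_three, Matrix.tail_cons, Matrix.vecHead, Matrix.vecTail, Function.comp] <;>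
    (try norm_num [Matrix.one_apply, Fin.ext_iff]) <;> first | decide | (rw [he1]; field_simp <;> ring)

end Aux

/-- For `t ≠ 0`, the matrix exponential of the element of `𝔏_t` with parameters `(r,s)`
equals the displayed element of `L_t`. -/
theorem stmt_6 (t : ℝ) (ht : t ≠ 0) (r s : ℝ) :
    NormedSpace.exp
      (!![0, r, s, 0;
          0, t * r, 0, r;
          0, 0, 0, s;
          0, 0, 0, 0] : Matrix (Fin 4) (Fin 4) ℝ) =
    !![1, (Real.exp (t * r) - 1) / t, s, (Real.exp (t * r) - t * r - 1) / t ^ 2 + s ^ 2 / 2;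
       0, Real.exp (t * r), 0, (Real.exp (t * r) - 1) / t;
       0, 0, 1, s;
       0, 0, 0, 1] :=
  stmt_6_aux t ht r s
end

section
/- For all real numbers r and s, the matrix exponential of the 4×4 real matrix ℓ₀(r,s) with rows (0,r,s,0), (0,0,0,r), (0,0,0,s), (0,0,0,0) equals the matrix M₀(r,s) with rows (1,r,s,(r²+s²)/2), (0,1,0,r), (0,0,1,s), (0,0,0,1). -/
/-- The matrix exponential of `ℓ₀(r,s)` equals `M₀(r,s)`. -/
theorem stmt_7 (r s : ℝ) :
    NormedSpace.exp
      (!![0, r, s, 0;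
          0, 0, 0, r;
          0, 0, 0, s;
          0, 0, 0, 0] : Matrix (Fin 4) (Fin 4) ℝ) =
    !![1, r, s, (r ^ 2 + s ^ 2) / 2;
       0, 1, 0, r;
       0, 0, 1, s;
       0, 0, 0, 1] := by
  set A : Matrix (Fin 4) (Fin 4) ℝ :=
    !![0, r, s, 0; 0, 0, 0, r; 0, 0, 0, s; 0, 0, 0, 0] with hA
  have hA2 : A ^ 2 = !![0, 0, 0, r^2 + s^2; 0, 0, 0, 0; 0, 0, 0, 0; 0, 0, 0, 0] := by
    rw [sq, hA]
    ext i j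
    fin_cases i <;> fin_cases j <;>
      simp [Matrix.mul_apply, Fin.sum_univ_four, Matrix.vecHead, Matrix.vecTail] <;> ring
  have hA3 : A ^ 3 = 0 := by
    rw [pow_succ, hA2, hA]
    ext i j
    fin_cases i <;> fin_cases j <;>
      simp [Matrix.mul_apply, Fin.sum_univ_four, Matrix.vecHead, Matrix.vecTail]
  have hpow : ∀ n, 3 ≤ n → A ^ n = 0 := by
    intro n hn
    obtain ⟨k, rfl⟩ := Nat.exists_eq_add_of_le hn
    rw [pow_add, hA3, zero_mul]
  have hexp : NormedSpace.exp A = ∑' n : ℕ, ((Nat.factorial n : ℝ))⁻¹ • A ^ n := by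
    rw [NormedSpace.exp_eq_tsum (𝕂 := ℝ)]
  rw [hexp, tsum_eq_sum (s := Finset.range 3)
    (fun n hn => by rw [hpow n (by simpa using fun h => hn (Finset.mem_range.mpr h))]; simp)]
  rw [Finset.sum_range_succ, Finset.sum_range_succ, Finset.sum_range_one, hA2]
  norm_num
  rw [hA]
  ext i j
  fin_cases i <;> fin_cases j <;>
    simp [Matrix.one_apply, Matrix.vecHead, Matrix.vecTail] <;> ring
end

section
/- Let (a,b) ∈ ℝ² with (a,b) ≠ (0,0) and let X'(a,b) be the 4×4 real matrix with rows (0,0,b,−a), (0,a,0,0), (0,0,0,b), (0,0,0,0). Then the minimal polynomial of X'(a,b) over ℝ is X²·(X − a) if a·b = 0, and is X³·(X − a) if a·b ≠ 0. -/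
open Polynomial

private abbrev MM (a b : ℝ) : Matrix (Fin 4) (Fin 4) ℝ :=
  !![0, 0, b, -a; 0, a, 0, 0; 0, 0, 0, b; 0, 0, 0, 0]

private lemma MM_sq (a b : ℝ) :
    MM a b ^ 2 = !![0,0,0,b*b; 0,a*a,0,0; 0,0,0,0; 0,0,0,0] := by
  rw [pow_two]
  ext i j
  fin_cases i <;> fin_cases j <;>
    norm_num [Matrix.mul_apply, Fin.sum_univ_four, Matrix.vecHead, Matrix.vecTail, Matrix.cons_val_two, Matrix.cons_val_three]

private lemma MM_cube (a b : ℝ) :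
    MM a b ^ 3 = !![0,0,0,0; 0,a*(a*a),0,0; 0,0,0,0; 0,0,0,0] := by
  rw [pow_succ, MM_sq]
  ext i j
  fin_cases i <;> fin_cases j <;>
    norm_num [Matrix.mul_apply, Fin.sum_univ_four, Matrix.vecHead, Matrix.vecTail, mul_comm, Matrix.cons_val_two, Matrix.cons_val_three]

private lemma stmt10_case_a0 (b : ℝ) (hb : b ≠ 0) :
    minpoly ℝ (MM 0 b) = X ^ 2 * (X - C (0:ℝ)) := by
  have hpm : (X ^ 2 * (X - C (0:ℝ))).Monic := (monic_X_pow 2).mul (monic_X_sub_C 0)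
  have hdeg : (X ^ 2 * (X - C (0:ℝ))).natDegree = 3 := by
    rw [(monic_X_pow 2).natDegree_mul (monic_X_sub_C 0)]
    simp
  refine (minpoly.unique ℝ _ hpm ?_ ?_).symm
  · rw [map_mul, map_pow, aeval_X, map_sub, aeval_X, aeval_C]
    rw [show ((algebraMap ℝ (Matrix (Fin 4) (Fin 4) ℝ)) 0) = 0 by simp]
    rw [sub_zero, ← pow_succ, MM_cube]
    norm_num
    ext i j
    fin_cases i <;> fin_cases j <;> rfl
  · intro q hq hq0
    by_contra hlt
    push_neg at hlt
    rw [degree_eq_natDegree hpm.ne_zero, hdeg] at hlt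
    have h3 : q.natDegree < 3 := (natDegree_lt_iff_degree_lt hq.ne_zero).mpr hlt
    have hsum := Polynomial.aeval_eq_sum_range' h3 (MM 0 b)
    rw [hq0] at hsum
    rw [Finset.sum_range_succ, Finset.sum_range_succ, Finset.sum_range_one, MM_sq] at hsum
    have e := fun i j => congrFun (congrFun hsum i) j
    have e00 := e 0 0
    have e02 := e 0 2
    have e03 := e 0 3
    norm_num [Matrix.add_apply, Matrix.smul_apply, Matrix.one_apply, Matrix.vecHead,
      Matrix.vecTail, Fin.ext_iff, Matrix.cons_val_two, Matrix.cons_val_three] at e00 e02 e03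
    replace e03 : 0 = 0 + q.coeff 2 * (b * b) := by rcases e03 with h | h <;> simp [h]
    have hc0 : q.coeff 0 = 0 := e00.symm
    have hc1 : q.coeff 1 = 0 := e02.resolve_right hb
    have hc2 : q.coeff 2 = 0 := by
      rw [zero_add] at e03
      rcases mul_eq_zero.mp e03.symm with h' | h'
      · exact h'
      · exact absurd h' (mul_ne_zero hb hb)
    have hlc := hq.coeff_natDegree
    clear e hsum hq0 hq hlt
    set n := q.natDegree with hn
    interval_cases n <;> linarith

private lemma stmt10_case_b0 (a : ℝ) (ha : a ≠ 0) :
    minpoly ℝ (MM a 0) = X ^ 2 * (X - C a) := by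
  have hpm : (X ^ 2 * (X - C a)).Monic := (monic_X_pow 2).mul (monic_X_sub_C a)
  have hdeg : (X ^ 2 * (X - C a)).natDegree = 3 := by
    rw [(monic_X_pow 2).natDegree_mul (monic_X_sub_C a)]
    simp
  refine (minpoly.unique ℝ _ hpm ?_ ?_).symm
  · rw [map_mul, map_pow, aeval_X, map_sub, aeval_X, aeval_C, MM_sq]
    ext i j
    fin_cases i <;> fin_cases j <;>
      norm_num [Matrix.mul_apply, Fin.sum_univ_four, Matrix.sub_apply,
        Matrix.algebraMap_matrix_apply, Matrix.vecHead, Matrix.vecTail, Matrix.cons_val_two, Matrix.cons_val_three]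
  · intro q hq hq0
    by_contra hlt
    push_neg at hlt
    rw [degree_eq_natDegree hpm.ne_zero, hdeg] at hlt
    have h3 : q.natDegree < 3 := (natDegree_lt_iff_degree_lt hq.ne_zero).mpr hlt
    have hsum := Polynomial.aeval_eq_sum_range' h3 (MM a 0)
    rw [hq0] at hsum
    rw [Finset.sum_range_succ, Finset.sum_range_succ, Finset.sum_range_one, MM_sq] at hsum
    have e := fun i j => congrFun (congrFun hsum i) j
    have e00 := e 0 0
    have e03 := e 0 3
    have e11 := e 1 1
    norm_num [Matrix.add_apply, Matrix.smul_apply, Matrix.one_apply, Matrix.vecHead,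
      Matrix.vecTail, Fin.ext_iff, Matrix.cons_val_two, Matrix.cons_val_three] at e00 e03 e11
    replace e03 : 0 = -(q.coeff 1 * a) := by rcases e03 with h | h <;> simp [h]
    have hc0 : q.coeff 0 = 0 := e00.symm
    have hc1 : q.coeff 1 = 0 := by
      have h' : q.coeff 1 * a = 0 := by linear_combination e03
      rcases mul_eq_zero.mp h' with h'' | h''
      · exact h''
      · exact absurd h'' ha
    have hc2 : q.coeff 2 = 0 := by
      have h' : q.coeff 2 * (a * a) = 0 := by linear_combination -e11 - hc0 - a * hc1
      rcases mul_eq_zero.mp h' with h'' | h''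
      · exact h''
      · exact absurd h'' (mul_ne_zero ha ha)
    have hlc := hq.coeff_natDegree
    clear e hsum hq0 hq hlt
    set n := q.natDegree with hn
    interval_cases n <;> linarith

private lemma stmt10_case_ab (a b : ℝ) (ha : a ≠ 0) (hb : b ≠ 0) :
    minpoly ℝ (MM a b) = X ^ 3 * (X - C a) := by
  have hpm : (X ^ 3 * (X - C a)).Monic := (monic_X_pow 3).mul (monic_X_sub_C a)
  have hdeg : (X ^ 3 * (X - C a)).natDegree = 4 := by
    rw [(monic_X_pow 3).natDegree_mul (monic_X_sub_C a)]
    simp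
  refine (minpoly.unique ℝ _ hpm ?_ ?_).symm
  · rw [map_mul, map_pow, aeval_X, map_sub, aeval_X, aeval_C, MM_cube]
    ext i j
    fin_cases i <;> fin_cases j <;>
      norm_num [Matrix.mul_apply, Fin.sum_univ_four, Matrix.sub_apply,
        Matrix.algebraMap_matrix_apply, Matrix.vecHead, Matrix.vecTail, Matrix.cons_val_two, Matrix.cons_val_three]
  · intro q hq hq0
    by_contra hlt
    push_neg at hlt
    rw [degree_eq_natDegree hpm.ne_zero, hdeg] at hlt
    have h4 : q.natDegree < 4 := (natDegree_lt_iff_degree_lt hq.ne_zero).mpr hlt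
    have hsum := Polynomial.aeval_eq_sum_range' h4 (MM a b)
    rw [hq0] at hsum
    rw [Finset.sum_range_succ, Finset.sum_range_succ, Finset.sum_range_succ,
      Finset.sum_range_one, MM_sq, MM_cube] at hsum
    have e := fun i j => congrFun (congrFun hsum i) j
    have e00 := e 0 0
    have e02 := e 0 2
    have e03 := e 0 3
    have e11 := e 1 1
    norm_num [Matrix.add_apply, Matrix.smul_apply, Matrix.one_apply, Matrix.vecHead,
      Matrix.vecTail, Fin.ext_iff, Matrix.cons_val_two, Matrix.cons_val_three] at e00 e02 e03 e11
    have hc0 : q.coeff 0 = 0 := e00.symm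
    have hc1 : q.coeff 1 = 0 := e02.resolve_right hb
    have hc2 : q.coeff 2 = 0 := by
      have h' : q.coeff 2 * (b * b) = 0 := by linear_combination -e03 + a * hc1
      rcases mul_eq_zero.mp h' with h'' | h''
      · exact h''
      · exact absurd h'' (mul_ne_zero hb hb)
    have hc3 : q.coeff 3 = 0 := by
      have h' : q.coeff 3 * (a * (a * a)) = 0 := by
        linear_combination -e11 - hc0 - a * hc1 - (a * a) * hc2
      rcases mul_eq_zero.mp h' with h'' | h''
      · exact h''
      · exact absurd h'' (mul_ne_zero ha (mul_ne_zero ha ha))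
    have hlc := hq.coeff_natDegree
    clear e hsum hq0 hq hlt
    set n := q.natDegree with hn
    interval_cases n <;> linarith

/-- The minimal polynomial of `X'(a,b) ∈ 𝔏'` is `X²(X − a)` if `ab = 0` and
`X³(X − a)` otherwise, for `(a,b) ≠ (0,0)`. -/
theorem stmt_10 (a b : ℝ) (hab : (a, b) ≠ (0, 0)) :
    (a * b = 0 →
      minpoly ℝ (!![0, 0, b, -a;
                    0, a, 0, 0;
                    0, 0, 0, b;
                    0, 0, 0, 0] : Matrix (Fin 4) (Fin 4) ℝ) =
        X ^ 2 * (X - C a)) ∧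
    (a * b ≠ 0 →
      minpoly ℝ (!![0, 0, b, -a;
                    0, a, 0, 0;
                    0, 0, 0, b;
                    0, 0, 0, 0] : Matrix (Fin 4) (Fin 4) ℝ) =
        X ^ 3 * (X - C a)) := by
  constructor
  · intro h
    rcases mul_eq_zero.mp h with rfl | rfl
    · have hb : b ≠ 0 := by simpa [Prod.ext_iff] using hab
      exact stmt10_case_a0 b hb
    · have ha : a ≠ 0 := by simpa [Prod.ext_iff] using hab
      exact stmt10_case_b0 a ha
  · intro h
    obtain ⟨ha, hb⟩ := mul_ne_zero_iff.mp h
    exact stmt10_case_ab a b ha hb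
end

section
/- Let 𝔉 be a 2-dimensional linear subspace of the 4×4 real matrices which is abelian (x·y = y·x for all x,y ∈ 𝔉). Suppose there is a nonzero linear functional f : 𝔉 → ℝ and a function n : 𝔉∖{0} → {2,3} such that for every nonzero x ∈ 𝔉 the minimal polynomial of x over ℝ equals X^{n(x)}·(X − f(x)), such that n(x) = 2 whenever f(x) = 0, and such that n(x) = 3 for some x. Then there exists an invertible 4×4 real matrix P such that P·𝔉·P⁻¹ equals either 𝔏' or 𝔏'₋, where 𝔏' is the set of matrices with rows (0,0,b,−a), (0,a,0,0), (0,0,0,b), (0,0,0,0) for (a,b) ∈ ℝ², and 𝔏'₋ is the set of matrices with rows (0,0,b,a), (0,a,0,0), (0,0,0,b), (0,0,0,0) for (a,b) ∈ ℝ². -/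
open Polynomial Matrix

private lemma mat_zero_of_forall_mulVec {A : Matrix (Fin 4) (Fin 4) ℝ}
    (h : ∀ u : Fin 4 → ℝ, A *ᵥ u = 0) : A = 0 := by
  ext i j
  simpa using congrFun (h (Pi.single j 1)) i

private lemma exists_mulVec_ne_zero {A : Matrix (Fin 4) (Fin 4) ℝ} (h : A ≠ 0) :
    ∃ u : Fin 4 → ℝ, A *ᵥ u ≠ 0 := by
  by_contra hc
  push_neg at hc
  exact h (mat_zero_of_forall_mulVec hc)

private lemma mat_zero_of_span {cb : Fin 4 → (Fin 4 → ℝ)}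
    (hsp : Submodule.span ℝ (Set.range cb) = ⊤) {A : Matrix (Fin 4) (Fin 4) ℝ}
    (h : ∀ j, A *ᵥ cb j = 0) : A = 0 := by
  apply mat_zero_of_forall_mulVec
  intro u
  have hu : u ∈ Submodule.span ℝ (Set.range cb) := by rw [hsp]; trivial
  obtain ⟨c, hc⟩ := (Submodule.mem_span_range_iff_exists_fun ℝ).1 hu
  have : A *ᵥ u = A.mulVecLin u := rfl
  rw [this, ← hc, map_sum]
  simp [Matrix.mulVecLin_apply, h]

/-- The abelian Lie algebra `𝔏'`. -/
def LieAlgL' : Set (Matrix (Fin 4) (Fin 4) ℝ) :=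
  {M | ∃ a b : ℝ,
    M = !![0, 0, b, -a;
           0, a, 0, 0;
           0, 0, 0, b;
           0, 0, 0, 0]}

/-- The abelian Lie algebra `𝔏'₋`. -/
def LieAlgL'neg : Set (Matrix (Fin 4) (Fin 4) ℝ) :=
  {M | ∃ a b : ℝ,
    M = !![0, 0, b, a;
           0, a, 0, 0;
           0, 0, 0, b;
           0, 0, 0, 0]}

set_option maxHeartbeats 3200000 in
/-- Lemma 3.2: a 2-dimensional abelian subalgebra `𝔉 ⊆ 𝔤𝔩₄(ℝ)` whose minimal polynomial
map has the form `X^{n(x)}(X − f(x))` with `n(x) ∈ {2,3}`, `n = 2` on `ker f`, and `n = 3`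
somewhere, is conjugate to `𝔏'` or to `𝔏'₋`. -/
theorem stmt_12 (𝔉 : Submodule ℝ (Matrix (Fin 4) (Fin 4) ℝ))
    (hdim : Module.finrank ℝ 𝔉 = 2)
    (habel : ∀ x ∈ 𝔉, ∀ y ∈ 𝔉, x * y = y * x)
    (f : 𝔉 →ₗ[ℝ] ℝ) (hf : f ≠ 0)
    (n : 𝔉 → ℕ)
    (hn23 : ∀ x : 𝔉, x ≠ 0 → n x = 2 ∨ n x = 3)
    (hmin : ∀ x : 𝔉, x ≠ 0 →
      minpoly ℝ (x : Matrix (Fin 4) (Fin 4) ℝ) = X ^ (n x) * (X - C (f x)))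
    (hker : ∀ x : 𝔉, x ≠ 0 → f x = 0 → n x = 2)
    (h3 : ∃ x : 𝔉, x ≠ 0 ∧ n x = 3) :
    ∃ P : Matrix (Fin 4) (Fin 4) ℝ, IsUnit P ∧
      ((fun x => P * x * P⁻¹) '' (𝔉 : Set (Matrix (Fin 4) (Fin 4) ℝ)) = LieAlgL' ∨
       (fun x => P * x * P⁻¹) '' (𝔉 : Set (Matrix (Fin 4) (Fin 4) ℝ)) = LieAlgL'neg) := by
  classical
  obtain ⟨y, hy0, hny⟩ := h3
  set lam := f y with hlam
  have hlam0 : lam ≠ 0 := by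
    intro h
    rw [hker y hy0 h] at hny; omega
  have hminy : minpoly ℝ (y : Matrix (Fin 4) (Fin 4) ℝ) = X ^ 3 * (X - C lam) := by
    rw [hmin y hy0, hny]
  -- z in the kernel of f
  have hkerne : ∃ z : 𝔉, z ≠ 0 ∧ f z = 0 := by
    by_contra hc
    push_neg at hc
    have hinj : Function.Injective f := by
      rw [← LinearMap.ker_eq_bot]
      rw [Submodule.eq_bot_iff]
      intro x hx
      by_contra hx0
      exact hc x hx0 (LinearMap.mem_ker.1 hx)
    have := LinearMap.finrank_le_finrank_of_injective hinj
    rw [hdim, Module.finrank_self] at this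
    omega
  obtain ⟨z, hz0, hfz⟩ := hkerne
  have hminz : minpoly ℝ (z : Matrix (Fin 4) (Fin 4) ℝ) = X ^ 3 := by
    rw [hmin z hz0, hker z hz0 hfz, hfz]
    simp [pow_succ]
  set Z : Matrix (Fin 4) (Fin 4) ℝ := (z : Matrix (Fin 4) (Fin 4) ℝ) with hZ
  set Y : Matrix (Fin 4) (Fin 4) ℝ := (y : Matrix (Fin 4) (Fin 4) ℝ) with hY
  have hcomm : Y * Z = Z * Y := habel Y y.2 Z z.2
  have hZ3 : Z ^ 3 = 0 := by
    have := minpoly.aeval ℝ Z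
    rw [hminz] at this
    simpa using this
  have hZ2 : Z ^ 2 ≠ 0 := by
    intro h
    have hdvd : minpoly ℝ Z ∣ X ^ 2 := minpoly.dvd ℝ Z (by simpa using h)
    have := Polynomial.natDegree_le_of_dvd hdvd (by exact pow_ne_zero 2 X_ne_zero)
    rw [hminz] at this
    simp at this
  have hYann : Y ^ 3 * (Y - lam • 1) = 0 := by
    have := minpoly.aeval ℝ Y
    rw [hminy] at this
    simpa [Algebra.algebraMap_eq_smul_one] using this
  have hY2 : Y ^ 2 * (Y - lam • 1) ≠ 0 := by
    intro h
    have hdvd : minpoly ℝ Y ∣ X ^ 2 * (X - C lam) := by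
      apply minpoly.dvd ℝ Y
      simpa [Algebra.algebraMap_eq_smul_one] using h
    have hne : (X ^ 2 * (X - C lam) : ℝ[X]) ≠ 0 :=
      mul_ne_zero (pow_ne_zero 2 X_ne_zero) (X_sub_C_ne_zero lam)
    have := Polynomial.natDegree_le_of_dvd hdvd hne
    rw [hminy] at this
    simp [Polynomial.natDegree_mul, X_sub_C_ne_zero lam, pow_ne_zero, X_ne_zero] at this
  have hY3 : Y ^ 3 ≠ 0 := by
    intro h
    have hdvd : minpoly ℝ Y ∣ X ^ 3 := minpoly.dvd ℝ Y (by simpa using h)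
    have := Polynomial.natDegree_le_of_dvd hdvd (pow_ne_zero 3 X_ne_zero)
    rw [hminy] at this
    simp [Polynomial.natDegree_mul, X_sub_C_ne_zero lam, pow_ne_zero, X_ne_zero] at this
  have hY4 : Y ^ 4 = lam • Y ^ 3 := by
    have : Y ^ 3 * Y - lam • (Y ^ 3 * 1) = 0 := by
      rw [← Matrix.mul_smul, ← Matrix.mul_sub]; exact hYann
    rw [mul_one, ← pow_succ] at this
    have := sub_eq_zero.mp this
    simpa using this
  have hY5 : Y ^ 5 = (lam ^ 2) • Y ^ 3 := by
    have : Y ^ 5 = Y ^ 4 * Y := pow_succ Y 4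
    rw [this, hY4, Matrix.smul_mul, ← pow_succ, hY4, smul_smul]
    ring_nf
  have hY6 : Y ^ 6 = (lam ^ 3) • Y ^ 3 := by
    have : Y ^ 6 = Y ^ 5 * Y := pow_succ Y 5
    rw [this, hY5, Matrix.smul_mul, ← pow_succ, hY4, smul_smul]
    ring_nf
  -- the eigenvector v
  obtain ⟨u1, hu1⟩ := exists_mulVec_ne_zero hY3
  set v : Fin 4 → ℝ := Y ^ 3 *ᵥ u1 with hv
  have hv0 : v ≠ 0 := hu1
  have hyv : Y *ᵥ v = lam • v := by
    rw [hv, mulVec_mulVec, ← pow_succ', ← Matrix.smul_mulVec]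
    congr 1
  -- the projection p and chain vector g
  set p : Matrix (Fin 4) (Fin 4) ℝ := (lam ^ 3)⁻¹ • Y ^ 3 with hp
  obtain ⟨u0, hu0⟩ := exists_mulVec_ne_zero hY2
  set g : Fin 4 → ℝ := (Y - lam • 1) *ᵥ u0 with hg
  set yg : Fin 4 → ℝ := Y *ᵥ g with hyg
  set y2g : Fin 4 → ℝ := Y *ᵥ yg with hy2g
  have hYY2 : Y * Y ^ 2 = Y ^ 3 := (pow_succ' Y 2).symm
  have hYY3 : Y * Y ^ 3 = Y ^ 4 := (pow_succ' Y 3).symm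
  have hY3Y3 : Y ^ 3 * Y ^ 3 = Y ^ 6 := (pow_add Y 3 3).symm
  have hy2g' : y2g = Y ^ 2 *ᵥ g := by
    rw [hy2g, hyg, mulVec_mulVec, ← pow_two]
  have hg2 : y2g ≠ 0 := by rw [hy2g', hg, mulVec_mulVec]; exact hu0
  have hg3 : Y *ᵥ y2g = 0 := by
    rw [hy2g', mulVec_mulVec, hYY2, hg, mulVec_mulVec, hYann, zero_mulVec]
  have hY3g : Y ^ 3 *ᵥ g = 0 := by
    rw [← hYY2, ← mulVec_mulVec, ← hy2g', hg3]
  have hY3v : Y ^ 3 *ᵥ v = (lam ^ 3) • v := by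
    rw [hv, mulVec_mulVec, hY3Y3, hY6, smul_mulVec]
  have hpv : p *ᵥ v = v := by
    rw [hp, smul_mulVec, hY3v, smul_smul, inv_mul_cancel₀ (pow_ne_zero 3 hlam0), one_smul]
  have hpg : p *ᵥ g = 0 := by rw [hp, smul_mulVec, hY3g, smul_zero]
  have hpyg : p *ᵥ yg = 0 := by
    rw [hp, smul_mulVec, hyg, mulVec_mulVec, (pow_succ Y 3).symm, hY4, smul_mulVec, hY3g]
    simp
  have hpy2g : p *ᵥ y2g = 0 := by
    rw [hp, smul_mulVec, hy2g', mulVec_mulVec]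
    have : Y ^ 3 * Y ^ 2 = Y ^ 5 := (pow_add Y 3 2).symm
    rw [this, hY5, smul_mulVec, hY3g]
    simp
  -- the first basis
  have hind1 : ∀ c0 c1 c2 c3 : ℝ, c0 • v + c1 • g + c2 • yg + c3 • y2g = 0 →
      c0 = 0 ∧ c1 = 0 ∧ c2 = 0 ∧ c3 = 0 := by
    intro c0 c1 c2 c3 hsum
    have h0 : c0 = 0 := by
      have := congrArg (fun x => p *ᵥ x) hsum
      simp only [mulVec_add, mulVec_smul, hpv, hpg, hpyg, hpy2g, smul_zero, add_zero,
        mulVec_zero] at this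
      exact (smul_eq_zero.1 this).resolve_right hv0
    have hA1 : Y *ᵥ g = yg := hyg.symm
    have hA2 : Y *ᵥ yg = y2g := hy2g.symm
    rw [h0, zero_smul, zero_add] at hsum
    have h1 : c1 = 0 := by
      have := congrArg (fun x => Y *ᵥ (Y *ᵥ x)) hsum
      simp only [mulVec_add, mulVec_smul, mulVec_zero, hA1, hA2, hg3, smul_zero,
        add_zero] at this
      exact (smul_eq_zero.1 this).resolve_right hg2
    rw [h1, zero_smul, zero_add] at hsum
    have h2 : c2 = 0 := by
      have := congrArg (fun x => Y *ᵥ x) hsum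
      simp only [mulVec_add, mulVec_smul, mulVec_zero, hA1, hA2, hg3, smul_zero,
        add_zero] at this
      exact (smul_eq_zero.1 this).resolve_right hg2
    rw [h2, zero_smul, zero_add] at hsum
    have h3 : c3 = 0 := (smul_eq_zero.1 hsum).resolve_right hg2
    exact ⟨h0, h1, h2, h3⟩
  have hb1li : LinearIndependent ℝ ![v, g, yg, y2g] := by
    rw [Fintype.linearIndependent_iff]
    intro c hc i
    rw [Fin.sum_univ_four] at hc
    simp only [Matrix.cons_val_zero, Matrix.cons_val_one, Matrix.head_cons,
      Matrix.cons_val_two, Matrix.tail_cons, Matrix.cons_val_three] at hc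
    obtain ⟨h0, h1, h2, h3⟩ := hind1 _ _ _ _ hc
    fin_cases i <;> assumption
  have hb1sp : Submodule.span ℝ (Set.range ![v, g, yg, y2g]) = ⊤ := by
    apply hb1li.span_eq_top_of_card_eq_finrank
    simp [Module.finrank_fin_fun]
  -- every lam-eigenvector is a multiple of v
  have heig : ∀ x : Fin 4 → ℝ, Y *ᵥ x = lam • x → ∃ a : ℝ, x = a • v := by
    intro x hx
    have hx' : x ∈ Submodule.span ℝ (Set.range ![v, g, yg, y2g]) := by
      rw [hb1sp]; trivial
    obtain ⟨c, hc⟩ := (Submodule.mem_span_range_iff_exists_fun ℝ).1 hx'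
    rw [Fin.sum_univ_four] at hc
    simp only [Matrix.cons_val_zero, Matrix.cons_val_one, Matrix.head_cons,
      Matrix.cons_val_two, Matrix.tail_cons, Matrix.cons_val_three] at hc
    set h : Fin 4 → ℝ := c 1 • g + c 2 • yg + c 3 • y2g with hh
    have hxh : x = c 0 • v + h := by rw [hh, ← hc]; abel
    have hyh : Y *ᵥ h = lam • h := by
      have := hx
      rw [hxh] at this
      simp only [mulVec_add, mulVec_smul, hyv, smul_add] at this
      rw [smul_comm (c 0) lam] at this
      exact add_left_cancel this
    have hy3h : Y *ᵥ (Y *ᵥ (Y *ᵥ h)) = (lam ^ 3) • h := by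
      simp only [hyh, mulVec_smul, smul_smul]
      ring_nf
    have hA1 : Y *ᵥ g = yg := hyg.symm
    have hA2 : Y *ᵥ yg = y2g := hy2g.symm
    have hy3h0 : Y *ᵥ (Y *ᵥ (Y *ᵥ h)) = 0 := by
      rw [hh]
      simp only [mulVec_add, mulVec_smul, hA1, hA2, hg3, smul_zero, add_zero,
        mulVec_zero, zero_add]
    rw [hy3h0] at hy3h
    have hh0 : h = 0 := by
      have := hy3h.symm
      rw [smul_eq_zero] at this
      exact this.resolve_left (pow_ne_zero 3 hlam0)
    exact ⟨c 0, by rw [hxh, hh0, add_zero]⟩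
  -- z kills v
  have hzv : Z *ᵥ v = 0 := by
    have hzy : ∀ x : Fin 4 → ℝ, Z *ᵥ (Y *ᵥ x) = Y *ᵥ (Z *ᵥ x) := by
      intro x
      rw [mulVec_mulVec, mulVec_mulVec, ← hcomm]
    obtain ⟨a, ha⟩ := heig (Z *ᵥ v) (by
      rw [← hzy, hyv, mulVec_smul])
    have hz3v : Z *ᵥ (Z *ᵥ (Z *ᵥ v)) = 0 := by
      rw [mulVec_mulVec, mulVec_mulVec]
      have : Z * Z * Z = Z ^ 3 := by rw [← pow_two, ← pow_succ]
      rw [this, hZ3, zero_mulVec]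
    have ha0 : a = 0 := by
      by_contra hA
      apply hv0
      have h1 : Z *ᵥ (Z *ᵥ (Z *ᵥ v)) = (a * a * a) • v := by
        simp only [ha, mulVec_smul, smul_smul]
      rw [hz3v] at h1
      exact (smul_eq_zero.1 h1.symm).resolve_left (mul_ne_zero (mul_ne_zero hA hA) hA)
    rw [ha, ha0, zero_smul]
  have hcm : Commute Y Z := hcomm
  -- choose u2 with Z² u2 ≠ 0 and define w, zw, z2w
  obtain ⟨u2, hu2⟩ := exists_mulVec_ne_zero hZ2
  have hYp : Y * p = lam • p := by
    rw [hp, Matrix.mul_smul, hYY3, hY4, smul_smul, smul_smul, mul_comm]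
  obtain ⟨a2, ha2⟩ : ∃ a, p *ᵥ u2 = a • v := by
    apply heig
    rw [mulVec_mulVec, hYp, smul_mulVec]
  set w : Fin 4 → ℝ := u2 - p *ᵥ u2 with hw
  have hZpu : Z *ᵥ (p *ᵥ u2) = 0 := by rw [ha2, mulVec_smul, hzv, smul_zero]
  set zw : Fin 4 → ℝ := Z *ᵥ w with hzw
  set z2w : Fin 4 → ℝ := Z *ᵥ zw with hz2w
  have hzw' : zw = Z *ᵥ u2 := by rw [hzw, hw, mulVec_sub, hZpu, sub_zero]
  have hz2w' : z2w = Z ^ 2 *ᵥ u2 := by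
    rw [hz2w, hzw', mulVec_mulVec, ← pow_two]
  have hz2w0 : z2w ≠ 0 := by rw [hz2w']; exact hu2
  have hZz2w : Z *ᵥ z2w = 0 := by
    rw [hz2w', mulVec_mulVec]
    have : Z * Z ^ 2 = Z ^ 3 := (pow_succ' Z 2).symm
    rw [this, hZ3, zero_mulVec]
  have hY3p : Y ^ 3 * p = Y ^ 3 := by
    rw [hp, Matrix.mul_smul, hY3Y3, hY6, smul_smul,
      inv_mul_cancel₀ (pow_ne_zero 3 hlam0), one_smul]
  have hY3w : Y ^ 3 *ᵥ w = 0 := by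
    rw [hw, mulVec_sub, mulVec_mulVec, hY3p, sub_self]
  have hpw : p *ᵥ w = 0 := by rw [hp, smul_mulVec, hY3w, smul_zero]
  have hY3zw : Y ^ 3 *ᵥ zw = 0 := by
    rw [hzw, mulVec_mulVec, (hcm.pow_left 3).eq, ← mulVec_mulVec, hY3w, mulVec_zero]
  have hY3z2w : Y ^ 3 *ᵥ z2w = 0 := by
    rw [hz2w, mulVec_mulVec, (hcm.pow_left 3).eq, ← mulVec_mulVec, hY3zw, mulVec_zero]
  have hpzw : p *ᵥ zw = 0 := by rw [hp, smul_mulVec, hY3zw, smul_zero]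
  have hpz2w : p *ᵥ z2w = 0 := by rw [hp, smul_mulVec, hY3z2w, smul_zero]
  have hZzw : Z *ᵥ zw = z2w := hz2w.symm
  have hZw : Z *ᵥ w = zw := hzw.symm
  -- the second basis
  have hind2 : ∀ c0 c1 c2 c3 : ℝ, c0 • z2w + c1 • zw + c2 • w + c3 • v = 0 →
      c0 = 0 ∧ c1 = 0 ∧ c2 = 0 ∧ c3 = 0 := by
    intro c0 c1 c2 c3 hsum
    have h3 : c3 = 0 := by
      have := congrArg (fun x => p *ᵥ x) hsum
      simp only [mulVec_add, mulVec_smul, hpv, hpw, hpzw, hpz2w, smul_zero, zero_add,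
        add_zero, mulVec_zero] at this
      exact (smul_eq_zero.1 this).resolve_right hv0
    rw [h3, zero_smul, add_zero] at hsum
    have h2 : c2 = 0 := by
      have := congrArg (fun x => Z *ᵥ (Z *ᵥ x)) hsum
      simp only [mulVec_add, mulVec_smul, mulVec_zero, hZw, hZzw, hZz2w, smul_zero,
        zero_add, add_zero] at this
      exact (smul_eq_zero.1 this).resolve_right hz2w0
    rw [h2, zero_smul, add_zero] at hsum
    have h1 : c1 = 0 := by
      have := congrArg (fun x => Z *ᵥ x) hsum
      simp only [mulVec_add, mulVec_smul, mulVec_zero, hZw, hZzw, hZz2w, smul_zero,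
        zero_add, add_zero] at this
      exact (smul_eq_zero.1 this).resolve_right hz2w0
    rw [h1, zero_smul, add_zero] at hsum
    exact ⟨(smul_eq_zero.1 hsum).resolve_right hz2w0, h1, h2, h3⟩
  have hb2li : LinearIndependent ℝ ![z2w, zw, w, v] := by
    rw [Fintype.linearIndependent_iff]
    intro c hc i
    rw [Fin.sum_univ_four] at hc
    simp only [Matrix.cons_val_zero, Matrix.cons_val_one, Matrix.head_cons,
      Matrix.cons_val_two, Matrix.tail_cons, Matrix.cons_val_three] at hc
    obtain ⟨h0, h1, h2, h3⟩ := hind2 _ _ _ _ hc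
    fin_cases i <;> assumption
  have hb2sp : Submodule.span ℝ (Set.range ![z2w, zw, w, v]) = ⊤ := by
    apply hb2li.span_eq_top_of_card_eq_finrank
    simp [Module.finrank_fin_fun]
  -- expand Y *ᵥ w in the second basis
  obtain ⟨c, hc⟩ := (Submodule.mem_span_range_iff_exists_fun ℝ).1
    (show Y *ᵥ w ∈ Submodule.span ℝ (Set.range ![z2w, zw, w, v]) by rw [hb2sp]; trivial)
  rw [Fin.sum_univ_four] at hc
  simp only [Matrix.cons_val_zero, Matrix.cons_val_one, Matrix.head_cons,
    Matrix.cons_val_two, Matrix.tail_cons, Matrix.cons_val_three] at hc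
  have hpYw : p *ᵥ (Y *ᵥ w) = 0 := by
    rw [hp, smul_mulVec, mulVec_mulVec]
    have : Y ^ 3 * Y = Y ^ 4 := (pow_succ Y 3).symm
    rw [this, hY4, smul_mulVec, hY3w]
    simp
  have hc3 : c 3 = 0 := by
    have := congrArg (fun x => p *ᵥ x) hc.symm
    simp only [mulVec_add, mulVec_smul, hpv, hpw, hpzw, hpz2w, smul_zero, zero_add,
      add_zero, hpYw] at this
    exact (smul_eq_zero.1 this.symm).resolve_right hv0
  rw [hc3, zero_smul, add_zero] at hc
  have hYw : Y *ᵥ w = c 0 • z2w + c 1 • zw + c 2 • w := hc.symm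
  have hYZvec : ∀ x : Fin 4 → ℝ, Y *ᵥ (Z *ᵥ x) = Z *ᵥ (Y *ᵥ x) := by
    intro x
    rw [mulVec_mulVec, mulVec_mulVec, hcm.eq]
  have hYzw : Y *ᵥ zw = c 1 • z2w + c 2 • zw := by
    rw [← hZw, hYZvec, hYw]
    simp only [mulVec_add, mulVec_smul, hZw, hZzw, hZz2w, smul_zero, zero_add]
  have hYz2w : Y *ᵥ z2w = c 2 • z2w := by
    rw [← hZzw, hYZvec, hYzw]
    simp only [mulVec_add, mulVec_smul, hZzw, hZz2w, smul_zero, zero_add]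
  have hy3w' : Y *ᵥ (Y *ᵥ (Y *ᵥ w)) = 0 := by
    rw [mulVec_mulVec, mulVec_mulVec]
    have : Y * Y * Y = Y ^ 3 := by rw [← pow_two, ← pow_succ]
    rw [this, hY3w]
  have hc2 : c 2 = 0 := by
    have hy2w : Y *ᵥ (Y *ᵥ w) =
        (c 0 * c 2 + c 1 * c 1 + c 2 * c 0) • z2w + (c 1 * c 2 + c 2 * c 1) • zw
          + (c 2 * c 2) • w := by
      rw [hYw]
      simp only [mulVec_add, mulVec_smul, hYw, hYzw, hYz2w, smul_add, smul_smul]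
      module
    have hy3w2 : Y *ᵥ (Y *ᵥ (Y *ᵥ w)) =
        ((c 0 * c 2 + c 1 * c 1 + c 2 * c 0) * c 2 + (c 1 * c 2 + c 2 * c 1) * c 1
          + (c 2 * c 2) * c 0) • z2w
        + ((c 1 * c 2 + c 2 * c 1) * c 2 + (c 2 * c 2) * c 1) • zw
        + (c 2 * c 2 * c 2) • w := by
      rw [hy2w]
      simp only [mulVec_add, mulVec_smul, hYw, hYzw, hYz2w, smul_add, smul_smul]
      module
    have := hind2 ((c 0 * c 2 + c 1 * c 1 + c 2 * c 0) * c 2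
        + (c 1 * c 2 + c 2 * c 1) * c 1 + c 2 * c 2 * c 0)
      ((c 1 * c 2 + c 2 * c 1) * c 2 + c 2 * c 2 * c 1) (c 2 * c 2 * c 2) 0
      (by rw [zero_smul, add_zero, ← hy3w2, hy3w'])
    have h := this.2.2.1
    have : c 2 * (c 2 * c 2) = 0 := by rw [← h]; ring
    rcases mul_eq_zero.1 this with h' | h'
    · exact h'
    · rcases mul_eq_zero.1 h' with h'' | h'' <;> exact h''
  rw [hc2, zero_smul, add_zero] at hYw hYzw
  rw [hc2, zero_smul] at hYz2w
  -- now Y *ᵥ w = c 0 • z2w + c 1 • zw, Y *ᵥ zw = c 1 • z2w, Y *ᵥ z2w = 0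
  have hsmul1 : ∀ x : Fin 4 → ℝ, (lam • (1 : Matrix (Fin 4) (Fin 4) ℝ)) *ᵥ x = lam • x := by
    intro x; rw [smul_mulVec, one_mulVec]
  have hb0 : c 1 ≠ 0 := by
    intro hb
    apply hY2
    apply mat_zero_of_span hb2sp
    intro j
    have hexp : ∀ x : Fin 4 → ℝ, (Y ^ 2 * (Y - lam • 1)) *ᵥ x
        = Y *ᵥ (Y *ᵥ (Y *ᵥ x)) - lam • (Y *ᵥ (Y *ᵥ x)) := by
      intro x
      rw [← mulVec_mulVec, sub_mulVec, hsmul1, mulVec_sub, mulVec_smul,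
        pow_two, ← mulVec_mulVec, ← mulVec_mulVec]
    rw [hexp]
    fin_cases j <;>
      simp [hb, hYw, hYzw, hYz2w, hyv, mulVec_add, mulVec_smul, mulVec_zero, smul_smul,
        mul_comm, mul_left_comm] <;>
      try module
  -- the element x0 = y - b z
  set x0 : 𝔉 := y - c 1 • z with hx0
  have hX0 : (x0 : Matrix (Fin 4) (Fin 4) ℝ) = Y - c 1 • Z := by
    rw [hx0]; simp; rfl
  have hX0v : (x0 : Matrix (Fin 4) (Fin 4) ℝ) *ᵥ v = lam • v := by
    rw [hX0, sub_mulVec, smul_mulVec, hzv, smul_zero, sub_zero, hyv]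
  have hX0w : (x0 : Matrix (Fin 4) (Fin 4) ℝ) *ᵥ w = c 0 • z2w := by
    rw [hX0, sub_mulVec, smul_mulVec, hZw, hYw]
    module
  have hX0zw : (x0 : Matrix (Fin 4) (Fin 4) ℝ) *ᵥ zw = 0 := by
    rw [hX0, sub_mulVec, smul_mulVec, hZzw, hYzw]
    exact sub_self _
  have hX0z2w : (x0 : Matrix (Fin 4) (Fin 4) ℝ) *ᵥ z2w = 0 := by
    rw [hX0, sub_mulVec, smul_mulVec, hZz2w, hYz2w, smul_zero, sub_zero]
  have hx0ne : x0 ≠ 0 := by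
    intro h
    have h0 : (x0 : Matrix (Fin 4) (Fin 4) ℝ) = 0 := by rw [h]; rfl
    rw [h0, zero_mulVec] at hX0v
    exact hv0 ((smul_eq_zero.1 hX0v.symm).resolve_left hlam0)
  have hd0 : c 0 ≠ 0 := by
    intro hd
    have hann : (x0 : Matrix (Fin 4) (Fin 4) ℝ) * ((x0 : Matrix (Fin 4) (Fin 4) ℝ) - lam • 1)
        = 0 := by
      apply mat_zero_of_span hb2sp
      intro j
      have hexp : ∀ x : Fin 4 → ℝ,
          ((x0 : Matrix (Fin 4) (Fin 4) ℝ) * ((x0 : Matrix (Fin 4) (Fin 4) ℝ) - lam • 1)) *ᵥ x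
          = (x0 : Matrix (Fin 4) (Fin 4) ℝ) *ᵥ ((x0 : Matrix (Fin 4) (Fin 4) ℝ) *ᵥ x)
            - lam • ((x0 : Matrix (Fin 4) (Fin 4) ℝ) *ᵥ x) := by
        intro x
        rw [← mulVec_mulVec, sub_mulVec, hsmul1, mulVec_sub, mulVec_smul]
      rw [hexp]
      fin_cases j <;>
        simp [hX0v, hX0w, hX0zw, hX0z2w, hd, mulVec_zero, mulVec_smul, smul_smul,
          mul_comm, mul_left_comm] <;>
        try module
    have hdvd : minpoly ℝ (x0 : Matrix (Fin 4) (Fin 4) ℝ) ∣ X * (X - C lam) := by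
      apply minpoly.dvd
      simpa [Algebra.algebraMap_eq_smul_one] using hann
    have hne : (X * (X - C lam) : ℝ[X]) ≠ 0 := mul_ne_zero X_ne_zero (X_sub_C_ne_zero lam)
    have hdeg := Polynomial.natDegree_le_of_dvd hdvd hne
    rw [hmin x0 hx0ne, Polynomial.natDegree_mul (pow_ne_zero _ X_ne_zero)
      (X_sub_C_ne_zero _), Polynomial.natDegree_mul X_ne_zero (X_sub_C_ne_zero _),
      Polynomial.natDegree_X_pow, Polynomial.natDegree_X, Polynomial.natDegree_X_sub_C,
      Polynomial.natDegree_X_sub_C] at hdeg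
    rcases hn23 x0 hx0ne with h | h <;> omega
  -- the scaling factor t
  set t : ℝ := Real.sqrt |lam / c 0| with ht
  have ht0 : t ≠ 0 := by
    rw [ht]
    exact Real.sqrt_ne_zero'.2 (abs_pos.2 (div_ne_zero hlam0 hd0))
  have ht2 : t ^ 2 = |lam / c 0| := Real.sq_sqrt (abs_nonneg _)
  -- the new basis and conjugating matrix
  set cb : Fin 4 → (Fin 4 → ℝ) := ![z2w, v, t • zw, t ^ 2 • w] with hcb
  set Q : Matrix (Fin 4) (Fin 4) ℝ := Matrix.of (fun i j => cb j i) with hQ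
  have hQmul : ∀ cv : Fin 4 → ℝ,
      Q *ᵥ cv = cv 0 • z2w + cv 1 • v + (cv 2 * t) • zw + (cv 3 * t ^ 2) • w := by
    intro cv
    funext i
    simp only [hQ, Matrix.mulVec, dotProduct, Fin.sum_univ_four, Matrix.of_apply, hcb,
      Matrix.cons_val_zero, Matrix.cons_val_one, Matrix.head_cons, Matrix.cons_val_two,
      Matrix.tail_cons, Matrix.cons_val_three, Pi.add_apply, Pi.smul_apply, smul_eq_mul]
    ring
  have hcbli : LinearIndependent ℝ cb := by
    rw [Fintype.linearIndependent_iff]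
    intro cv hcv i
    rw [Fin.sum_univ_four] at hcv
    simp only [hcb, Matrix.cons_val_zero, Matrix.cons_val_one, Matrix.head_cons,
      Matrix.cons_val_two, Matrix.tail_cons, Matrix.cons_val_three] at hcv
    have h4 := hind2 (cv 0) (cv 2 * t) (cv 3 * t ^ 2) (cv 1) (by
      rw [← hcv]
      module)
    have h2 : cv 2 = 0 := by
      rcases mul_eq_zero.1 h4.2.1 with h | h
      · exact h
      · exact absurd h ht0
    have h3 : cv 3 = 0 := by
      rcases mul_eq_zero.1 h4.2.2.1 with h | h
      · exact h
      · exact absurd h (pow_ne_zero 2 ht0)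
    fin_cases i
    · exact h4.1
    · exact h4.2.2.2
    · exact h2
    · exact h3
  have hcbsp : Submodule.span ℝ (Set.range cb) = ⊤ := by
    apply hcbli.span_eq_top_of_card_eq_finrank
    simp [Module.finrank_fin_fun]
  have hQsurj : Function.Surjective Q.mulVec := by
    intro u
    have hu : u ∈ Submodule.span ℝ (Set.range cb) := by rw [hcbsp]; trivial
    obtain ⟨cv, hcv⟩ := (Submodule.mem_span_range_iff_exists_fun ℝ).1 hu
    exact ⟨cv, by rw [← hcv, Fin.sum_univ_four, hQmul, hcb]; simp; module⟩
  have hQu : IsUnit Q := Matrix.mulVec_surjective_iff_isUnit.1 hQsurj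
  have hQdet : IsUnit Q.det := (Matrix.isUnit_iff_isUnit_det Q).1 hQu
  -- target matrices
  set SB : Matrix (Fin 4) (Fin 4) ℝ := !![0,0,t,0; 0,0,0,0; 0,0,0,t; 0,0,0,0] with hSB
  set SA : Matrix (Fin 4) (Fin 4) ℝ :=
    !![0,0,0,c 0 * t ^ 2; 0,lam,0,0; 0,0,0,0; 0,0,0,0] with hSA
  have hmatext : ∀ A B : Matrix (Fin 4) (Fin 4) ℝ,
      A *ᵥ ![1,0,0,0] = B *ᵥ ![1,0,0,0] → A *ᵥ ![0,1,0,0] = B *ᵥ ![0,1,0,0] →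
      A *ᵥ ![0,0,1,0] = B *ᵥ ![0,0,1,0] → A *ᵥ ![0,0,0,1] = B *ᵥ ![0,0,0,1] → A = B := by
    intro A B h0 h1 h2 h3
    ext i j
    fin_cases j
    · simpa [Matrix.mulVec, dotProduct, Fin.sum_univ_four] using congrFun h0 i
    · simpa [Matrix.mulVec, dotProduct, Fin.sum_univ_four] using congrFun h1 i
    · simpa [Matrix.mulVec, dotProduct, Fin.sum_univ_four] using congrFun h2 i
    · simpa [Matrix.mulVec, dotProduct, Fin.sum_univ_four] using congrFun h3 i
  have hQe0 : Q *ᵥ ![1,0,0,0] = z2w := by rw [hQmul]; simp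
  have hQe1 : Q *ᵥ ![0,1,0,0] = v := by rw [hQmul]; simp
  have hQe2 : Q *ᵥ ![0,0,1,0] = t • zw := by rw [hQmul]; simp
  have hQe3 : Q *ᵥ ![0,0,0,1] = t ^ 2 • w := by rw [hQmul]; simp
  have hQet : Q *ᵥ ![t,0,0,0] = t • z2w := by rw [hQmul]; simp
  have hQet2 : Q *ᵥ ![0,0,t,0] = (t * t) • zw := by rw [hQmul]; simp
  have hQelam : Q *ᵥ ![0,lam,0,0] = lam • v := by rw [hQmul]; simp
  have hQect : Q *ᵥ ![c 0 * t ^ 2,0,0,0] = (c 0 * t ^ 2) • z2w := by rw [hQmul]; simp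
  have hSBe0 : SB *ᵥ ![1,0,0,0] = 0 := by
    funext i; fin_cases i <;> simp [hSB, Matrix.mulVec, dotProduct, Fin.sum_univ_four, Matrix.vecHead, Matrix.vecTail]
  have hSBe1 : SB *ᵥ ![0,1,0,0] = 0 := by
    funext i; fin_cases i <;> simp [hSB, Matrix.mulVec, dotProduct, Fin.sum_univ_four, Matrix.vecHead, Matrix.vecTail]
  have hSBe2 : SB *ᵥ ![0,0,1,0] = ![t,0,0,0] := by
    funext i; fin_cases i <;> simp [hSB, Matrix.mulVec, dotProduct, Fin.sum_univ_four, Matrix.vecHead, Matrix.vecTail]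
  have hSBe3 : SB *ᵥ ![0,0,0,1] = ![0,0,t,0] := by
    funext i; fin_cases i <;> simp [hSB, Matrix.mulVec, dotProduct, Fin.sum_univ_four, Matrix.vecHead, Matrix.vecTail]
  have hSAe0 : SA *ᵥ ![1,0,0,0] = 0 := by
    funext i; fin_cases i <;> simp [hSA, Matrix.mulVec, dotProduct, Fin.sum_univ_four, Matrix.vecHead, Matrix.vecTail]
  have hSAe1 : SA *ᵥ ![0,1,0,0] = ![0,lam,0,0] := by
    funext i; fin_cases i <;> simp [hSA, Matrix.mulVec, dotProduct, Fin.sum_univ_four, Matrix.vecHead, Matrix.vecTail]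
  have hSAe2 : SA *ᵥ ![0,0,1,0] = 0 := by
    funext i; fin_cases i <;> simp [hSA, Matrix.mulVec, dotProduct, Fin.sum_univ_four, Matrix.vecHead, Matrix.vecTail]
  have hSAe3 : SA *ᵥ ![0,0,0,1] = ![c 0 * t ^ 2,0,0,0] := by
    funext i; fin_cases i <;> simp [hSA, Matrix.mulVec, dotProduct, Fin.sum_univ_four, Matrix.vecHead, Matrix.vecTail]
  have hZQ : Z * Q = Q * SB := by
    apply hmatext
    · rw [← mulVec_mulVec, ← mulVec_mulVec, hQe0, hSBe0, mulVec_zero, hZz2w]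
    · rw [← mulVec_mulVec, ← mulVec_mulVec, hQe1, hSBe1, mulVec_zero, hzv]
    · rw [← mulVec_mulVec, ← mulVec_mulVec, hQe2, hSBe2, hQet, mulVec_smul, hZzw]
    · rw [← mulVec_mulVec, ← mulVec_mulVec, hQe3, hSBe3, hQet2, mulVec_smul, hZw, pow_two]
  have hX0Q : (x0 : Matrix (Fin 4) (Fin 4) ℝ) * Q = Q * SA := by
    apply hmatext
    · rw [← mulVec_mulVec, ← mulVec_mulVec, hQe0, hSAe0, mulVec_zero, hX0z2w]
    · rw [← mulVec_mulVec, ← mulVec_mulVec, hQe1, hSAe1, hQelam, hX0v]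
    · rw [← mulVec_mulVec, ← mulVec_mulVec, hQe2, hSAe2, mulVec_zero, mulVec_smul, hX0zw,
        smul_zero]
    · rw [← mulVec_mulVec, ← mulVec_mulVec, hQe3, hSAe3, hQect, mulVec_smul, hX0w,
        smul_smul, mul_comm]
  have hPz : Q⁻¹ * Z * Q = SB := by
    rw [mul_assoc, hZQ, ← mul_assoc, Matrix.nonsing_inv_mul Q hQdet, one_mul]
  have hPx0 : Q⁻¹ * (x0 : Matrix (Fin 4) (Fin 4) ℝ) * Q = SA := by
    rw [mul_assoc, hX0Q, ← mul_assoc, Matrix.nonsing_inv_mul Q hQdet, one_mul]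
  have hconj : ∀ al be : ℝ,
      Q⁻¹ * (al • (x0 : Matrix (Fin 4) (Fin 4) ℝ) + be • Z) * Q = al • SA + be • SB := by
    intro al be
    rw [Matrix.mul_add, Matrix.add_mul, Matrix.mul_smul, Matrix.mul_smul, Matrix.smul_mul,
      Matrix.smul_mul, hPz, hPx0]
  -- every element of 𝔉 is a combination of x0 and z
  have hZne : Z ≠ 0 := by
    intro h
    apply hZ2
    rw [h]
    simp
  have hFsp : ∀ m : 𝔉, ∃ al be : ℝ,
      (m : Matrix (Fin 4) (Fin 4) ℝ) = al • (x0 : Matrix (Fin 4) (Fin 4) ℝ) + be • Z := by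
    have hli : LinearIndependent ℝ ![x0, z] := by
      rw [Fintype.linearIndependent_iff]
      intro cv hcv i
      rw [Fin.sum_univ_two] at hcv
      simp only [Matrix.cons_val_zero, Matrix.cons_val_one, Matrix.head_cons] at hcv
      have hcv' : cv 0 • (x0 : Matrix (Fin 4) (Fin 4) ℝ) + cv 1 • Z = 0 := by
        have := congrArg (fun a : 𝔉 => (a : Matrix (Fin 4) (Fin 4) ℝ)) hcv
        simpa using this
      have h0 : cv 0 = 0 := by
        have := congrArg (fun A => A *ᵥ v) hcv'
        simp only [add_mulVec, smul_mulVec, hX0v, hzv, smul_zero, add_zero,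
          zero_mulVec, smul_smul] at this
        rcases smul_eq_zero.1 this with h | h
        · exact (mul_eq_zero.1 h).resolve_right hlam0
        · exact absurd h hv0
      rw [h0, zero_smul, zero_add] at hcv'
      have h1 : cv 1 = 0 := (smul_eq_zero.1 hcv').resolve_right hZne
      fin_cases i
      · exact h0
      · exact h1
    have hsp2 : Submodule.span ℝ (Set.range ![x0, z]) = ⊤ := by
      apply hli.span_eq_top_of_card_eq_finrank
      simp [hdim]
    intro m
    have hm : m ∈ Submodule.span ℝ (Set.range ![x0, z]) := by rw [hsp2]; trivial
    obtain ⟨cv, hcv⟩ := (Submodule.mem_span_range_iff_exists_fun ℝ).1 hm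
    rw [Fin.sum_univ_two] at hcv
    simp only [Matrix.cons_val_zero, Matrix.cons_val_one, Matrix.head_cons] at hcv
    refine ⟨cv 0, cv 1, ?_⟩
    have := congrArg (fun a : 𝔉 => (a : Matrix (Fin 4) (Fin 4) ℝ)) hcv
    simpa using this.symm
  -- elements of the span land in 𝔉
  have hmem : ∀ al be : ℝ,
      al • (x0 : Matrix (Fin 4) (Fin 4) ℝ) + be • Z ∈ 𝔉 :=
    fun al be => 𝔉.add_mem (𝔉.smul_mem al x0.2) (𝔉.smul_mem be z.2)
  -- conclusion
  have hQinv : IsUnit Q⁻¹ := by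
    rw [Matrix.isUnit_iff_isUnit_det, Matrix.det_nonsing_inv]
    exact isUnit_ringInverse.2 hQdet
  have hQQ : Q⁻¹⁻¹ = Q := Matrix.nonsing_inv_nonsing_inv Q hQdet
  refine ⟨Q⁻¹, hQinv, ?_⟩
  rw [hQQ]
  rcases le_or_gt 0 (lam / c 0) with hsgn | hsgn
  · -- lam / c 0 > 0 : conjugate to 𝔏'₋
    right
    have hct : c 0 * t ^ 2 = lam := by
      rw [ht2, abs_of_nonneg hsgn, mul_div_cancel₀ _ hd0]
    ext m
    simp only [Set.mem_image, SetLike.mem_coe, LieAlgL'neg, Set.mem_setOf_eq]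
    constructor
    · rintro ⟨mm, hmm, rfl⟩
      obtain ⟨al, be, hal⟩ := hFsp ⟨mm, hmm⟩
      have hal' : mm = al • (x0 : Matrix (Fin 4) (Fin 4) ℝ) + be • Z := hal
      refine ⟨al * lam, be * t, ?_⟩
      rw [hal', hconj al be]
      ext i j
      fin_cases i <;> fin_cases j <;>
        simp [hSA, hSB, hct, Matrix.vecHead, Matrix.vecTail] <;> ring
    · rintro ⟨a, b, rfl⟩
      refine ⟨(a / lam) • (x0 : Matrix (Fin 4) (Fin 4) ℝ) + (b / t) • Z, hmem _ _, ?_⟩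
      rw [hconj]
      ext i j
      fin_cases i <;> fin_cases j <;>
        simp [hSA, hSB, hct, Matrix.vecHead, Matrix.vecTail, div_mul_cancel₀, hlam0, ht0]
  · -- lam / c 0 < 0 : conjugate to 𝔏'
    left
    have hct : c 0 * t ^ 2 = -lam := by
      rw [ht2, abs_of_neg hsgn, mul_neg, mul_div_cancel₀ _ hd0]
    ext m
    simp only [Set.mem_image, SetLike.mem_coe, LieAlgL', Set.mem_setOf_eq]
    constructor
    · rintro ⟨mm, hmm, rfl⟩
      obtain ⟨al, be, hal⟩ := hFsp ⟨mm, hmm⟩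
      have hal' : mm = al • (x0 : Matrix (Fin 4) (Fin 4) ℝ) + be • Z := hal
      refine ⟨al * lam, be * t, ?_⟩
      rw [hal', hconj al be]
      ext i j
      fin_cases i <;> fin_cases j <;>
        simp [hSA, hSB, hct, Matrix.vecHead, Matrix.vecTail] <;> ring
    · rintro ⟨a, b, rfl⟩
      refine ⟨(a / lam) • (x0 : Matrix (Fin 4) (Fin 4) ℝ) + (b / t) • Z, hmem _ _, ?_⟩
      rw [hconj]
      ext i j
      fin_cases i <;> fin_cases j <;>
        simp [hSA, hSB, hct, Matrix.vecHead, Matrix.vecTail, div_mul_cancel₀, hlam0, ht0] <;>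
        ring_nf <;> simp [div_mul_cancel₀, hlam0, ht0]
end

section
/- For every real t ≠ 0 and all (x₁,x₂) ∈ ℝ², we have V_t · X'(x₁,x₂) · V_t⁻¹ = Y, where V_t is the 4×4 real matrix with rows (1/t², 1/t², 0, −1/t²), (0, 1/t, 0, −1/t), (0, 0, 1/t, 0), (0, 0, 0, 1), X'(x₁,x₂) is the matrix with rows (0,0,x₂,−x₁), (0,x₁,0,0), (0,0,0,x₂), (0,0,0,0), and Y is the matrix with rows (0, x₁/t, x₂/t, 0), (0, x₁, 0, x₁/t), (0, 0, 0, x₂/t), (0, 0, 0, 0). In particular V_t conjugates the Lie algebra 𝔏' = {X'(a,b) : (a,b) ∈ ℝ²} onto the Lie algebra 𝔏_t. -/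
/-- Equation (3.7): `V_t` conjugates the element `X'(x₁,x₂)` of `𝔏'` to the corresponding
element of `𝔏_t`; in particular `V_t` conjugates `𝔏'` onto `𝔏_t`. -/
theorem stmt_13 (t : ℝ) (ht : t ≠ 0) (x₁ x₂ : ℝ) :
    (!![1 / t ^ 2, 1 / t ^ 2, 0, -(1 / t ^ 2);
        0, 1 / t, 0, -(1 / t);
        0, 0, 1 / t, 0;
        0, 0, 0, 1] : Matrix (Fin 4) (Fin 4) ℝ) *
      !![0, 0, x₂, -x₁;
         0, x₁, 0, 0;
         0, 0, 0, x₂;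
         0, 0, 0, 0] *
      (!![1 / t ^ 2, 1 / t ^ 2, 0, -(1 / t ^ 2);
          0, 1 / t, 0, -(1 / t);
          0, 0, 1 / t, 0;
          0, 0, 0, 1] : Matrix (Fin 4) (Fin 4) ℝ)⁻¹ =
    !![0, x₁ / t, x₂ / t, 0;
       0, x₁, 0, x₁ / t;
       0, 0, 0, x₂ / t;
       0, 0, 0, 0] := by
  have hdet : (!![1 / t ^ 2, 1 / t ^ 2, 0, -(1 / t ^ 2);
        0, 1 / t, 0, -(1 / t);
        0, 0, 1 / t, 0;
        0, 0, 0, 1] : Matrix (Fin 4) (Fin 4) ℝ).det ≠ 0 := by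
    simp [Matrix.det_succ_row_zero, Fin.sum_univ_succ]
    positivity
  have := (!![1 / t ^ 2, 1 / t ^ 2, 0, -(1 / t ^ 2);
        0, 1 / t, 0, -(1 / t);
        0, 0, 1 / t, 0;
        0, 0, 0, 1] : Matrix (Fin 4) (Fin 4) ℝ).invertibleOfIsUnitDet
      (isUnit_iff_ne_zero.mpr hdet)
  rw [Matrix.mul_inv_eq_iff_eq_mul_of_invertible]
  ext i j
  fin_cases i <;> fin_cases j <;>
    simp [Matrix.mul_apply, Fin.sum_univ_four, Matrix.vecHead, Matrix.vecTail] <;> field_simp <;> (first | ring1 | (left; ring1) | tauto)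
end

section
/- Let a, b : ℝ → ℝ² be functions with a(0) = b(0) = (0,0) that are differentiable at 0 and whose derivatives a'(0), b'(0) at 0 are linearly independent. For t ≠ 0 set A_t = exp(X'(a(t))) and B_t = exp(X'(b(t))), and let V_t be the 4×4 matrix with rows (1/t², 1/t², 0, −1/t²), (0, 1/t, 0, −1/t), (0, 0, 1/t, 0), (0, 0, 0, 1). Then as t → 0 (through nonzero values), V_t·A_t·V_t⁻¹ converges to exp(ℓ₀(a'(0))) and V_t·B_t·V_t⁻¹ converges to exp(ℓ₀(b'(0))); moreover the two limit matrices commute and generate a free abelian group of rank 2, i.e. exp(ℓ₀(a'(0)))^m · exp(ℓ₀(b'(0)))^k = I with m, k ∈ ℤ implies m = k = 0. -/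
open scoped Topology

/-- The element `X'(a₁,a₂)` of the Lie algebra `𝔏'`. -/
def Xprime (v : ℝ × ℝ) : Matrix (Fin 4) (Fin 4) ℝ :=
  !![0, 0, v.2, -v.1;
     0, v.1, 0, 0;
     0, 0, 0, v.2;
     0, 0, 0, 0]

/-- The element `ℓ₀(r,s)` of the Lie algebra `𝔏₀`. -/
def ell0 (v : ℝ × ℝ) : Matrix (Fin 4) (Fin 4) ℝ :=
  !![0, v.1, v.2, 0;
     0, 0, 0, v.1;
     0, 0, 0, v.2;
     0, 0, 0, 0]

/-- The conjugating matrix `V_t`. -/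
noncomputable def Vmat (t : ℝ) : Matrix (Fin 4) (Fin 4) ℝ :=
  !![1 / t ^ 2, 1 / t ^ 2, 0, -(1 / t ^ 2);
     0, 1 / t, 0, -(1 / t);
     0, 0, 1 / t, 0;
     0, 0, 0, 1]

open Filter

section helpers
variable {α : Type*}

lemma one_fin_four' [Zero α] [One α] :
    (1 : Matrix (Fin 4) (Fin 4) α) = !![1,0,0,0; 0,1,0,0; 0,0,1,0; 0,0,0,1] := by
  ext i j; fin_cases i <;> fin_cases j <;>
    simp [Matrix.one_apply, Matrix.vecHead, Matrix.vecTail]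

lemma zero_fin_four' [Zero α] :
    (0 : Matrix (Fin 4) (Fin 4) α) = !![0,0,0,0; 0,0,0,0; 0,0,0,0; 0,0,0,0] := by
  ext i j; fin_cases i <;> fin_cases j <;> simp [Matrix.vecHead, Matrix.vecTail]

lemma diagonal_fin_four' [Zero α] (x y z w : α) :
    Matrix.diagonal ![x,y,z,w] = !![x,0,0,0; 0,y,0,0; 0,0,z,0; 0,0,0,w] := by
  ext i j; fin_cases i <;> fin_cases j <;>
    simp [Matrix.diagonal, Matrix.vecHead, Matrix.vecTail]

lemma mul_fin_four' [NonUnitalNonAssocSemiring α]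
    (a₁₁ a₁₂ a₁₃ a₁₄ a₂₁ a₂₂ a₂₃ a₂₄ a₃₁ a₃₂ a₃₃ a₃₄ a₄₁ a₄₂ a₄₃ a₄₄
     b₁₁ b₁₂ b₁₃ b₁₄ b₂₁ b₂₂ b₂₃ b₂₄ b₃₁ b₃₂ b₃₃ b₃₄ b₄₁ b₄₂ b₄₃ b₄₄ : α) :
    !![a₁₁, a₁₂, a₁₃, a₁₄; a₂₁, a₂₂, a₂₃, a₂₄; a₃₁, a₃₂, a₃₃, a₃₄; a₄₁, a₄₂, a₄₃, a₄₄] *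
    !![b₁₁, b₁₂, b₁₃, b₁₄; b₂₁, b₂₂, b₂₃, b₂₄; b₃₁, b₃₂, b₃₃, b₃₄; b₄₁, b₄₂, b₄₃, b₄₄] =
    !![a₁₁*b₁₁ + a₁₂*b₂₁ + a₁₃*b₃₁ + a₁₄*b₄₁, a₁₁*b₁₂ + a₁₂*b₂₂ + a₁₃*b₃₂ + a₁₄*b₄₂,
       a₁₁*b₁₃ + a₁₂*b₂₃ + a₁₃*b₃₃ + a₁₄*b₄₃, a₁₁*b₁₄ + a₁₂*b₂₄ + a₁₃*b₃₄ + a₁₄*b₄₄;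
       a₂₁*b₁₁ + a₂₂*b₂₁ + a₂₃*b₃₁ + a₂₄*b₄₁, a₂₁*b₁₂ + a₂₂*b₂₂ + a₂₃*b₃₂ + a₂₄*b₄₂,
       a₂₁*b₁₃ + a₂₂*b₂₃ + a₂₃*b₃₃ + a₂₄*b₄₃, a₂₁*b₁₄ + a₂₂*b₂₄ + a₂₃*b₃₄ + a₂₄*b₄₄;
       a₃₁*b₁₁ + a₃₂*b₂₁ + a₃₃*b₃₁ + a₃₄*b₄₁, a₃₁*b₁₂ + a₃₂*b₂₂ + a₃₃*b₃₂ + a₃₄*b₄₂,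
       a₃₁*b₁₃ + a₃₂*b₂₃ + a₃₃*b₃₃ + a₃₄*b₄₃, a₃₁*b₁₄ + a₃₂*b₂₄ + a₃₃*b₃₄ + a₃₄*b₄₄;
       a₄₁*b₁₁ + a₄₂*b₂₁ + a₄₃*b₃₁ + a₄₄*b₄₁, a₄₁*b₁₂ + a₄₂*b₂₂ + a₄₃*b₃₂ + a₄₄*b₄₂,
       a₄₁*b₁₃ + a₄₂*b₂₃ + a₄₃*b₃₃ + a₄₄*b₄₃, a₄₁*b₁₄ + a₄₂*b₂₄ + a₄₃*b₃₄ + a₄₄*b₄₄] := by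
  ext i j
  fin_cases i <;> fin_cases j <;> simp [Matrix.mul_apply, Fin.sum_univ_four]

lemma smul_fin_four' {R : Type*} [SMul R α] (c : R)
    (a₁₁ a₁₂ a₁₃ a₁₄ a₂₁ a₂₂ a₂₃ a₂₄ a₃₁ a₃₂ a₃₃ a₃₄ a₄₁ a₄₂ a₄₃ a₄₄ : α) :
    c • !![a₁₁, a₁₂, a₁₃, a₁₄; a₂₁, a₂₂, a₂₃, a₂₄; a₃₁, a₃₂, a₃₃, a₃₄; a₄₁, a₄₂, a₄₃, a₄₄] =
    !![c•a₁₁, c•a₁₂, c•a₁₃, c•a₁₄; c•a₂₁, c•a₂₂, c•a₂₃, c•a₂₄;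
       c•a₃₁, c•a₃₂, c•a₃₃, c•a₃₄; c•a₄₁, c•a₄₂, c•a₄₃, c•a₄₄] := by
  ext i j; fin_cases i <;> fin_cases j <;> simp

lemma add_fin_four' [Add α]
    (a₁₁ a₁₂ a₁₃ a₁₄ a₂₁ a₂₂ a₂₃ a₂₄ a₃₁ a₃₂ a₃₃ a₃₄ a₄₁ a₄₂ a₄₃ a₄₄
     b₁₁ b₁₂ b₁₃ b₁₄ b₂₁ b₂₂ b₂₃ b₂₄ b₃₁ b₃₂ b₃₃ b₃₄ b₄₁ b₄₂ b₄₃ b₄₄ : α) :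
    !![a₁₁, a₁₂, a₁₃, a₁₄; a₂₁, a₂₂, a₂₃, a₂₄; a₃₁, a₃₂, a₃₃, a₃₄; a₄₁, a₄₂, a₄₃, a₄₄] +
    !![b₁₁, b₁₂, b₁₃, b₁₄; b₂₁, b₂₂, b₂₃, b₂₄; b₃₁, b₃₂, b₃₃, b₃₄; b₄₁, b₄₂, b₄₃, b₄₄] =
    !![a₁₁+b₁₁, a₁₂+b₁₂, a₁₃+b₁₃, a₁₄+b₁₄; a₂₁+b₂₁, a₂₂+b₂₂, a₂₃+b₂₃, a₂₄+b₂₄;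
       a₃₁+b₃₁, a₃₂+b₃₂, a₃₃+b₃₃, a₃₄+b₃₄; a₄₁+b₄₁, a₄₂+b₄₂, a₄₃+b₄₃, a₄₄+b₄₄] := by
  ext i j; fin_cases i <;> fin_cases j <;> simp
end helpers

lemma exp_cube_zero' {A : Matrix (Fin 4) (Fin 4) ℝ} (h : A ^ 3 = 0) :
    NormedSpace.exp A = 1 + A + (2:ℝ)⁻¹ • (A * A) := by
  rw [NormedSpace.exp_eq_tsum ℝ]
  simp only []
  rw [tsum_eq_sum (s := Finset.range 3) (fun n hn => ?_)]
  · norm_num [Finset.sum_range_succ, pow_two]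
  · obtain ⟨m, rfl⟩ : ∃ m, n = 3 + m := ⟨n - 3, by simp at hn; omega⟩
    rw [pow_add, h, zero_mul, smul_zero]

/-- The explicit form of `exp (ℓ₀ v)`. -/
noncomputable def Mell (v : ℝ × ℝ) : Matrix (Fin 4) (Fin 4) ℝ :=
  !![1, v.1, v.2, (v.1 ^ 2 + v.2 ^ 2) / 2; 0, 1, 0, v.1; 0, 0, 1, v.2; 0, 0, 0, 1]

lemma exp_ell0' (v : ℝ × ℝ) : NormedSpace.exp (ell0 v) = Mell v := by
  rw [Mell, exp_cube_zero', ell0, one_fin_four', mul_fin_four', smul_fin_four', add_fin_four',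
    add_fin_four']
  · norm_num; ring
  · rw [ell0, pow_succ, pow_two, mul_fin_four', mul_fin_four', zero_fin_four']
    norm_num

lemma exp_Xprime' (v : ℝ × ℝ) : NormedSpace.exp (Xprime v) =
    !![1, 0, v.2, -v.1 + v.2 ^ 2 / 2;
       0, Real.exp v.1, 0, 0;
       0, 0, 1, v.2;
       0, 0, 0, 1] := by
  have hsplit : Xprime v = Matrix.diagonal ![0, v.1, 0, 0] +
      !![0,0,v.2,-v.1; 0,0,0,0; 0,0,0,v.2; 0,0,0,0] := by
    rw [diagonal_fin_four', add_fin_four', Xprime]; norm_num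
  have hcomm : Commute (Matrix.diagonal ![(0:ℝ), v.1, 0, 0])
      !![0,0,v.2,-v.1; 0,0,0,0; 0,0,0,v.2; 0,0,0,0] := by
    unfold Commute SemiconjBy
    rw [diagonal_fin_four', mul_fin_four', mul_fin_four']; norm_num
  rw [hsplit, Matrix.exp_add_of_commute _ _ hcomm, Matrix.exp_diagonal, Pi.exp_def,
    exp_cube_zero' (by rw [pow_succ, pow_two, mul_fin_four', mul_fin_four', zero_fin_four']; norm_num)]
  have : (fun i => NormedSpace.exp (![(0:ℝ), v.1, 0, 0] i)) = ![1, Real.exp v.1, 1, 1] := by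
    funext i; fin_cases i <;>
      simp [← Real.exp_eq_exp_ℝ, Matrix.vecHead, Matrix.vecTail]
  rw [this, diagonal_fin_four', one_fin_four', mul_fin_four', smul_fin_four', add_fin_four',
    add_fin_four', mul_fin_four']
  rw [show -v.1 + v.2 ^ 2 / 2 = -v.1 + 1/2 * (v.2 * v.2) by ring]
  norm_num

/-- Explicit right inverse of `Vmat`. -/
noncomputable def Wmat (t : ℝ) : Matrix (Fin 4) (Fin 4) ℝ :=
  !![t^2, -t, 0, 0; 0, t, 0, 1; 0, 0, t, 0; 0, 0, 0, 1]

lemma Vmat_inv {t : ℝ} (ht : t ≠ 0) : (Vmat t)⁻¹ = Wmat t := by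
  apply Matrix.inv_eq_right_inv
  rw [Vmat, Wmat, mul_fin_four', one_fin_four']
  ext i j
  fin_cases i <;> fin_cases j <;>
    (simp [Matrix.vecHead, Matrix.vecTail]; try field_simp) <;> ring

lemma conj_eq {t : ℝ} (ht : t ≠ 0) (x y : ℝ) :
    Vmat t * !![1, 0, y, -x + y ^ 2 / 2;
                0, Real.exp x, 0, 0;
                0, 0, 1, y;
                0, 0, 0, 1] * Wmat t =
    !![1, (Real.exp x - 1)/t, y/t, (Real.exp x - 1 - x + y^2/2)/t^2;
       0, Real.exp x, 0, (Real.exp x - 1)/t;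
       0, 0, 1, y/t;
       0, 0, 0, 1] := by
  rw [Vmat, Wmat, mul_fin_four', mul_fin_four']
  ext i j
  fin_cases i <;> fin_cases j <;>
    (simp [Matrix.vecHead, Matrix.vecTail]; try field_simp) <;> ring

lemma tendsto_matrix_fin_four
    {l : Filter ℝ} {f11 f12 f13 f14 f21 f22 f23 f24 f31 f32 f33 f34 f41 f42 f43 f44 : ℝ → ℝ}
    {L11 L12 L13 L14 L21 L22 L23 L24 L31 L32 L33 L34 L41 L42 L43 L44 : ℝ}
    (h11 : Tendsto f11 l (𝓝 L11)) (h12 : Tendsto f12 l (𝓝 L12))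
    (h13 : Tendsto f13 l (𝓝 L13)) (h14 : Tendsto f14 l (𝓝 L14))
    (h21 : Tendsto f21 l (𝓝 L21)) (h22 : Tendsto f22 l (𝓝 L22))
    (h23 : Tendsto f23 l (𝓝 L23)) (h24 : Tendsto f24 l (𝓝 L24))
    (h31 : Tendsto f31 l (𝓝 L31)) (h32 : Tendsto f32 l (𝓝 L32))
    (h33 : Tendsto f33 l (𝓝 L33)) (h34 : Tendsto f34 l (𝓝 L34))
    (h41 : Tendsto f41 l (𝓝 L41)) (h42 : Tendsto f42 l (𝓝 L42))
    (h43 : Tendsto f43 l (𝓝 L43)) (h44 : Tendsto f44 l (𝓝 L44)) :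
    Tendsto (fun t => (!![f11 t, f12 t, f13 t, f14 t;
                         f21 t, f22 t, f23 t, f24 t;
                         f31 t, f32 t, f33 t, f34 t;
                         f41 t, f42 t, f43 t, f44 t] : Matrix (Fin 4) (Fin 4) ℝ)) l
      (𝓝 !![L11, L12, L13, L14; L21, L22, L23, L24; L31, L32, L33, L34; L41, L42, L43, L44]) := by
  apply tendsto_pi_nhds.2
  intro i
  rw [tendsto_pi_nhds]
  intro j
  fin_cases i <;> fin_cases j <;>
    simpa [Matrix.vecHead, Matrix.vecTail] using ‹_›

/-- `(e^u - 1 - u)/u²`, extended continuously at `0`. -/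
noncomputable def hfun (u : ℝ) : ℝ := if u = 0 then 1/2 else (Real.exp u - 1 - u) / u ^ 2

lemma tendsto_hfun : Tendsto hfun (𝓝 0) (𝓝 (1/2)) := by
  have key : ∀ u : ℝ, |u| ≤ 1 → |hfun u - 1/2| ≤ |u| := by
    intro u hu
    by_cases h : u = 0
    · simp [hfun, h]
    · have hb := Real.exp_bound hu (n := 3) (by norm_num)
      have hsum : ∑ m ∈ Finset.range 3, u ^ m / m.factorial = 1 + u + u ^ 2 / 2 := by
        norm_num [Finset.sum_range_succ]
      rw [hsum] at hb
      rw [hfun, if_neg h,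
        show (Real.exp u - 1 - u) / u ^ 2 - 1/2 = (Real.exp u - (1 + u + u ^ 2 / 2)) / u ^ 2 by
          field_simp; ring,
        abs_div]
      rw [div_le_iff₀ (by positivity)]
      calc |Real.exp u - (1 + u + u ^ 2 / 2)| ≤ |u| ^ 3 * (4 / (6 * 3)) := by
            simpa [Nat.factorial] using hb
        _ ≤ |u| * |u ^ 2| := by
            rw [abs_pow]
            rw [show |u| ^ 3 = |u| * |u| ^ 2 by ring]
            nlinarith [abs_nonneg u, sq_nonneg |u|, pow_two_nonneg |u|]
  have h0 : Tendsto (fun u : ℝ => hfun u - 1/2) (𝓝 0) (𝓝 0) := by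
    apply squeeze_zero_norm' (a := fun u : ℝ => |u|)
    · filter_upwards [Metric.ball_mem_nhds (0:ℝ) one_pos] with u hu
      exact key u (by simpa [abs_sub_comm] using le_of_lt (by simpa using hu))
    · simpa using (continuous_abs.tendsto (0:ℝ))
  have := h0.add_const (1/2)
  simpa using this

lemma main_tendsto (a : ℝ → ℝ × ℝ) (a' : ℝ × ℝ)
    (ha0 : a 0 = 0) (ha : HasDerivAt a a' 0) :
    Tendsto (fun t : ℝ => Vmat t * NormedSpace.exp (Xprime (a t)) * (Vmat t)⁻¹)
      (𝓝[≠] 0) (𝓝 (NormedSpace.exp (ell0 a'))) := by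
  have ha1 : HasDerivAt (fun t => (a t).1) a'.1 0 := by
    simpa using (ha.hasFDerivAt.fst).hasDerivAt
  have ha2 : HasDerivAt (fun t => (a t).2) a'.2 0 := by
    simpa using (ha.hasFDerivAt.snd).hasDerivAt
  have hx0 : (a 0).1 = 0 := by rw [ha0]; rfl
  have hy0 : (a 0).2 = 0 := by rw [ha0]; rfl
  have hexp : HasDerivAt (fun t => Real.exp (a t).1) a'.1 0 := by
    simpa [hx0] using ha1.exp
  have s1 : Tendsto (fun t => (Real.exp (a t).1 - 1)/t) (𝓝[≠] 0) (𝓝 a'.1) := by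
    have h := hasDerivAt_iff_tendsto_slope.mp hexp
    apply h.congr
    intro t
    simp [slope_def_field, hx0]
  have s0 : Tendsto (fun t => (a t).1/t) (𝓝[≠] 0) (𝓝 a'.1) := by
    have h := hasDerivAt_iff_tendsto_slope.mp ha1
    apply h.congr
    intro t
    simp [slope_def_field, hx0]
  have s2 : Tendsto (fun t => (a t).2/t) (𝓝[≠] 0) (𝓝 a'.2) := by
    have h := hasDerivAt_iff_tendsto_slope.mp ha2
    apply h.congr
    intro t
    simp [slope_def_field, hy0]
  have hcont : Tendsto (fun t => (a t).1) (𝓝[≠] 0) (𝓝 0) := by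
    have := ha1.continuousAt.tendsto
    rw [hx0] at this
    exact this.mono_left nhdsWithin_le_nhds
  have hexp1 : Tendsto (fun t => Real.exp (a t).1) (𝓝[≠] 0) (𝓝 1) := by
    have := (Real.continuous_exp.tendsto 0).comp hcont
    simpa [Function.comp_def] using this
  have s3 : Tendsto (fun t => hfun ((a t).1) * ((a t).1/t)^2 + ((a t).2/t)^2/2) (𝓝[≠] 0)
      (𝓝 ((1/2) * a'.1^2 + a'.2^2/2)) :=
    ((tendsto_hfun.comp hcont).mul (s0.pow 2)).add ((s2.pow 2).div_const 2)
  have s3' : Tendsto (fun t => (Real.exp (a t).1 - 1 - (a t).1 + ((a t).2)^2/2)/t^2) (𝓝[≠] 0)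
      (𝓝 ((a'.1^2 + a'.2^2)/2)) := by
    rw [show (a'.1^2 + a'.2^2)/2 = (1/2) * a'.1^2 + a'.2^2/2 by ring]
    apply s3.congr'
    filter_upwards [self_mem_nhdsWithin] with t ht
    have ht : t ≠ 0 := ht
    by_cases hx : (a t).1 = 0
    · simp only [hfun, if_pos hx, hx]
      field_simp
      simp
    · simp only [hfun, if_neg hx]
      field_simp
  have key : Tendsto (fun t : ℝ =>
      (!![1, (Real.exp (a t).1 - 1)/t, (a t).2/t,
            (Real.exp (a t).1 - 1 - (a t).1 + ((a t).2)^2/2)/t^2;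
          0, Real.exp (a t).1, 0, (Real.exp (a t).1 - 1)/t;
          0, 0, 1, (a t).2/t;
          0, 0, 0, 1] : Matrix (Fin 4) (Fin 4) ℝ)) (𝓝[≠] 0) (𝓝 (Mell a')) := by
    rw [Mell]
    exact tendsto_matrix_fin_four tendsto_const_nhds s1 s2 s3'
      tendsto_const_nhds hexp1 tendsto_const_nhds s1
      tendsto_const_nhds tendsto_const_nhds tendsto_const_nhds s2
      tendsto_const_nhds tendsto_const_nhds tendsto_const_nhds tendsto_const_nhds
  rw [exp_ell0']
  apply key.congr'
  filter_upwards [self_mem_nhdsWithin] with t ht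
  have ht : t ≠ 0 := ht
  rw [exp_Xprime', Vmat_inv ht, conj_eq ht]

lemma Mell_mul (u v : ℝ × ℝ) : Mell u * Mell v = Mell (u + v) := by
  rw [Mell, Mell, Mell, mul_fin_four']
  ext i j
  fin_cases i <;> fin_cases j <;>
    (simp [Matrix.vecHead, Matrix.vecTail]; try ring)

lemma Mell_zero : Mell 0 = 1 := by
  rw [Mell, one_fin_four']
  norm_num

lemma Mell_inv (v : ℝ × ℝ) : (Mell v)⁻¹ = Mell (-v) :=
  Matrix.inv_eq_right_inv (by rw [Mell_mul, add_neg_cancel, Mell_zero])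

lemma Mell_pow (v : ℝ × ℝ) (n : ℕ) : Mell v ^ n = Mell ((n : ℝ) • v) := by
  induction n with
  | zero => simpa using Mell_zero.symm
  | succ n ih =>
    rw [pow_succ, ih, Mell_mul]
    apply congrArg
    push_cast
    module

lemma Mell_zpow (v : ℝ × ℝ) (m : ℤ) : Mell v ^ m = Mell ((m : ℝ) • v) := by
  cases m with
  | ofNat n => rw [Int.ofNat_eq_coe, zpow_natCast, Mell_pow]; norm_num
  | negSucc n =>
    rw [zpow_negSucc, Mell_pow, Mell_inv]
    apply congrArg
    push_cast
    module

/-- Proposition 3.4: if `a, b : ℝ → ℝ²` vanish at `0`, are differentiable at `0`, and have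
linearly independent derivatives there, then the `V_t`-conjugates of `exp(X'(a(t)))` and
`exp(X'(b(t)))` converge as `t → 0` to `exp(ℓ₀(a'(0)))` and `exp(ℓ₀(b'(0)))`, which commute
and generate a rank-2 free abelian group. -/
theorem stmt_14 (a b : ℝ → ℝ × ℝ) (a' b' : ℝ × ℝ)
    (ha0 : a 0 = 0) (hb0 : b 0 = 0)
    (ha : HasDerivAt a a' 0) (hb : HasDerivAt b b' 0)
    (hind : LinearIndependent ℝ ![a', b']) :
    Filter.Tendsto (fun t : ℝ => Vmat t * NormedSpace.exp (Xprime (a t)) * (Vmat t)⁻¹)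
      (𝓝[≠] 0) (𝓝 (NormedSpace.exp (ell0 a'))) ∧
    Filter.Tendsto (fun t : ℝ => Vmat t * NormedSpace.exp (Xprime (b t)) * (Vmat t)⁻¹)
      (𝓝[≠] 0) (𝓝 (NormedSpace.exp (ell0 b'))) ∧
    Commute (NormedSpace.exp (ell0 a')) (NormedSpace.exp (ell0 b')) ∧
    ∀ m k : ℤ, NormedSpace.exp (ell0 a') ^ m * NormedSpace.exp (ell0 b') ^ k = 1 →
      m = 0 ∧ k = 0 := by
  refine ⟨main_tendsto a a' ha0 ha, main_tendsto b b' hb0 hb, ?_, ?_⟩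
  · rw [exp_ell0', exp_ell0']
    unfold Commute SemiconjBy
    rw [Mell_mul, Mell_mul, add_comm]
  · intro m k hmk
    rw [exp_ell0', exp_ell0', Mell_zpow, Mell_zpow, Mell_mul] at hmk
    have h01 : ((m : ℝ) • a' + (k : ℝ) • b').1 = 0 := by
      have := congrFun (congrFun hmk 0) 1
      rw [Mell, one_fin_four'] at this
      simpa using this
    have h02 : ((m : ℝ) • a' + (k : ℝ) • b').2 = 0 := by
      have := congrFun (congrFun hmk 0) 2
      rw [Mell, one_fin_four'] at this
      simpa using this
    have hz : (m : ℝ) • a' + (k : ℝ) • b' = 0 := Prod.ext h01 h02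
    obtain ⟨hm, hk⟩ := LinearIndependent.pair_iff.mp hind _ _ hz
    exact ⟨by exact_mod_cast hm, by exact_mod_cast hk⟩
end
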